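/- arXiv:0707.0114 — 6 statements merged into one kernel-verified Lean document; each statement's English description precedes it below -/
import Mathlib

section
/- Let V be a type and E : V → V → Prop a directed graph relation that is acyclic, in the sense that the transitive closure of E is irreflexive. Let Q be a finite set of vertices that is a reachability antichain: for any two distinct q, q' ∈ Q, q' is not reachable from q and q is not reachable from q' under the reflexive-transitive closure of E. Then every directed path contains at most one element of Q, and consequently any finite family of directed paths whose vertex sets jointly cover Q has cardinality at least the cardinality of Q. -/
private lemma chain'_head_reach {V : Type*} (E : V → V → Prop) :
    ∀ (x : V) (xs : List V), List.Chain' E (x :: xs) → ∀ b ∈ xs,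
      Relation.ReflTransGen E x b := by
  intro x xs
  induction xs generalizing x with
  | nil => intro _ b hb; simp at hb
  | cons y ys ih =>
    intro h b hb
    rw [List.Chain', List.isChain_cons_cons] at h
    rcases List.mem_cons.mp hb with rfl | hb
    · exact Relation.ReflTransGen.single h.1
    · exact Relation.ReflTransGen.head h.1 (ih y h.2 b hb)

private lemma chain'_comparable {V : Type*} (E : V → V → Prop) :
    ∀ (p : List V), List.Chain' E p → ∀ q ∈ p, ∀ q' ∈ p,
      Relation.ReflTransGen E q q' ∨ Relation.ReflTransGen E q' q := by
  intro p
  induction p with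
  | nil => intro _ q hq; simp at hq
  | cons x xs ih =>
    intro h q hq q' hq'
    rcases List.mem_cons.mp hq with rfl | hq <;>
      rcases List.mem_cons.mp hq' with h' | hq'
    · left; rw [h']
    · left; exact chain'_head_reach E q xs h q' hq'
    · right; rw [h']; exact chain'_head_reach E x xs h q hq
    · exact ih h.tail q hq q' hq'

/-- Let `E` be an acyclic directed graph relation (its transitive
closure is irreflexive) and let `Q` be a finite reachability antichain: no two
distinct elements of `Q` are reachable from one another under the
reflexive-transitive closure of `E`.  Then (1) every directed path (duplicate-free
list of vertices with consecutive pairs related by `E`) contains at most one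
element of `Q`, and (2) any finite family of directed paths whose vertices
jointly cover `Q` has cardinality at least that of `Q`. -/
theorem antichain_path_cover_bound {V : Type*} [DecidableEq V] (E : V → V → Prop)
    (hac : Irreflexive (Relation.TransGen E))
    (Q : Finset V)
    (hQ : ∀ q ∈ Q, ∀ q' ∈ Q, q ≠ q' → ¬ Relation.ReflTransGen E q q') :
    (∀ p : List V, p.Nodup → p.Chain' E →
        (Q.filter (fun q => q ∈ p)).card ≤ 1) ∧
    (∀ P : Finset (List V), (∀ p ∈ P, p.Nodup ∧ p.Chain' E) →
        (∀ q ∈ Q, ∃ p ∈ P, q ∈ p) → Q.card ≤ P.card) := by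
  have key : ∀ p : List V, p.Chain' E →
      (Q.filter (fun q => q ∈ p)).card ≤ 1 := by
    intro p hch
    apply Finset.card_le_one.mpr
    intro q hq q' hq'
    simp only [Finset.mem_filter] at hq hq'
    by_contra hne
    rcases chain'_comparable E p hch q hq.2 q' hq'.2 with h | h
    · exact hQ q hq.1 q' hq'.1 hne h
    · exact hQ q' hq'.1 q hq.1 (Ne.symm hne) h
  constructor
  · intro p _ hch; exact key p hch
  · intro P hP hcov
    have hf : ∀ q ∈ Q, ∃ p ∈ P, q ∈ p := hcov
    classical
    apply Finset.card_le_card_of_injOn (fun q => if h : q ∈ Q then (hf q h).choose else [])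
    · intro q hq
      simp only [dif_pos hq]
      exact Finset.mem_coe.mpr (by rw [dif_pos (Finset.mem_coe.mp hq)]; exact (hf q (Finset.mem_coe.mp hq)).choose_spec.1)
    · intro q hq q' hq' heq
      simp only [Finset.mem_coe] at hq hq'
      simp only [dif_pos hq, dif_pos hq'] at heq
      by_contra hne
      set p := (hf q hq).choose with hp
      have h1 : q ∈ p := (hf q hq).choose_spec.2
      have h2 : q' ∈ p := heq ▸ (hf q' hq').choose_spec.2
      have hcard := key p (hP p (hf q hq).choose_spec.1).2
      have : ({q, q'} : Finset V) ⊆ Q.filter (fun x => x ∈ p) := by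
        intro x hx
        rcases Finset.mem_insert.mp hx with rfl | hx
        · exact Finset.mem_filter.mpr ⟨hq, h1⟩
        · rw [Finset.mem_singleton] at hx; subst hx
          exact Finset.mem_filter.mpr ⟨hq', h2⟩
      have h2card : 2 ≤ (Q.filter (fun x => x ∈ p)).card := by
        calc 2 = ({q, q'} : Finset V).card := (Finset.card_pair hne).symm
        _ ≤ _ := Finset.card_le_card this
      omega
end

section
/- Let V be a finite type and E : V → V → Prop a directed graph relation that is acyclic, in the sense that the transitive closure of E is irreflexive. Fix vertices s, t : V and assume that every vertex of V lies on some directed path from s to t. Then the minimum cardinality of a set of directed paths from s to t whose vertices jointly cover all of V equals the maximum cardinality of a reachability antichain in V, i.e., of a subset Q ⊆ V such that for any two distinct q, q' ∈ Q, neither is reachable from the other under the reflexive-transitive closure of E. In particular, every minimum-size cover of V by s–t paths has this same cardinality. -/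
open scoped Classical
set_option linter.unusedSectionVars false
section D
variable {α : Type*} [DecidableEq α] (le : α → α → Prop)

def IsChainF (c : Finset α) : Prop := ∀ x ∈ c, ∀ y ∈ c, le x y ∨ le y x
def IsAntichainF (A : Finset α) : Prop := ∀ x ∈ A, ∀ y ∈ A, le x y → x = y

noncomputable def widthF (S : Finset α) : ℕ :=
  (S.powerset.filter (fun A => IsAntichainF le A)).sup Finset.card

lemma antichain_card_le_width {S A : Finset α} (hAS : A ⊆ S) (hA : IsAntichainF le A) :
    A.card ≤ widthF le S :=
  Finset.le_sup (by simp [Finset.mem_filter, Finset.mem_powerset, hAS, hA])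

lemma exists_width_antichain (S : Finset α) :
    ∃ A ⊆ S, IsAntichainF le A ∧ A.card = widthF le S := by
  have hne : (S.powerset.filter (fun A => IsAntichainF le A)).Nonempty := by
    refine ⟨∅, ?_⟩
    rw [Finset.mem_filter]
    exact ⟨Finset.empty_mem_powerset _, by simp [IsAntichainF]⟩
  obtain ⟨A, hA, hcard⟩ := Finset.exists_mem_eq_sup _ hne Finset.card
  rw [Finset.mem_filter, Finset.mem_powerset] at hA
  exact ⟨A, hA.1, hA.2, hcard.symm⟩

lemma widthF_mono {S T : Finset α} (h : S ⊆ T) : widthF le S ≤ widthF le T := by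
  apply Finset.sup_le
  intro A hA
  rw [Finset.mem_filter, Finset.mem_powerset] at hA
  exact antichain_card_le_width le (hA.1.trans h) hA.2

variable (htrans : ∀ {a b c}, le a b → le b c → le a c)
  (hanti : ∀ {a b}, le a b → le b a → a = b)
  (hrefl : ∀ a, le a a)

include htrans hanti in
lemma exists_maximalF : ∀ (n : ℕ) (S : Finset α), S.card ≤ n → S.Nonempty →
    ∃ m ∈ S, ∀ x ∈ S, le m x → x = m := by
  intro n
  induction n with
  | zero => intro S hc hne; simp [Finset.card_eq_zero.mp (Nat.le_zero.mp hc)] at hne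
  | succ n ih =>
    intro S hc ⟨x, hx⟩
    set T := S.filter (fun y => le x y ∧ y ≠ x) with hT
    by_cases hTne : T.Nonempty
    · have hxT : x ∉ T := by simp [hT]
      have hTc : T.card ≤ n := by
        have : T.card < S.card := Finset.card_lt_card ⟨Finset.filter_subset _ _, fun hsub => hxT (hsub hx)⟩
        omega
      obtain ⟨m, hmT, hmax⟩ := ih T hTc hTne
      rw [hT, Finset.mem_filter] at hmT
      refine ⟨m, hmT.1, fun y hy hmy => ?_⟩
      by_cases hym : y = m
      · exact hym
      · have hxy : le x y := htrans hmT.2.1 hmy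
        have hyx : y ≠ x := by
          rintro rfl
          exact hmT.2.2 (hanti hmy hmT.2.1)
        exact hmax y (by rw [hT, Finset.mem_filter]; exact ⟨hy, hxy, hyx⟩) hmy
    · refine ⟨x, hx, fun y hy hxy => ?_⟩
      by_contra hne
      exact hTne ⟨y, by rw [hT, Finset.mem_filter]; exact ⟨hy, hxy, hne⟩⟩

include htrans hanti hrefl in
lemma exists_greatestF (c : Finset α) (hc : IsChainF le c) (hne : c.Nonempty) :
    ∃ g ∈ c, ∀ x ∈ c, le x g := by
  obtain ⟨m, hm, hmax⟩ := exists_maximalF le htrans hanti c.card c le_rfl hne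
  refine ⟨m, hm, fun x hx => ?_⟩
  rcases hc x hx m hm with h | h
  · exact h
  · rw [hmax x hx h]; exact hrefl m

include htrans hanti hrefl in
lemma exists_leastF (c : Finset α) (hc : IsChainF le c) (hne : c.Nonempty) :
    ∃ g ∈ c, ∀ x ∈ c, le g x := by
  have := exists_greatestF (fun a b => le b a) (fun h1 h2 => htrans h2 h1)
    (fun h1 h2 => (hanti h2 h1)) hrefl c (fun x hx y hy => (hc x hx y hy).symm) hne
  exact this

include htrans hanti hrefl in
lemma sort_chainF : ∀ (n : ℕ) (c : Finset α), c.card ≤ n → IsChainF le c →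
    ∃ l : List α, l.toFinset = c ∧ l.Chain' le := by
  intro n
  induction n with
  | zero => intro c hc _; exact ⟨[], by simp [Finset.card_eq_zero.mp (Nat.le_zero.mp hc)]; exact List.isChain_nil⟩
  | succ n ih =>
    intro c hc hchain
    rcases c.eq_empty_or_nonempty with rfl | hne
    · exact ⟨[], by simp; exact List.isChain_nil⟩
    obtain ⟨g, hg, hleast⟩ := exists_leastF le htrans hanti hrefl c hchain hne
    have hcard : (c.erase g).card ≤ n := by
      have := Finset.card_erase_of_mem hg; omega
    obtain ⟨l, hl, hchain'⟩ := ih (c.erase g) hcard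
      (fun x hx y hy => hchain x (Finset.mem_of_mem_erase hx) y (Finset.mem_of_mem_erase hy))
    refine ⟨g :: l, ?_, ?_⟩
    · simp only [List.toFinset_cons, hl]
      exact Finset.insert_erase hg
    · change List.IsChain _ _; rw [List.isChain_cons]
      refine ⟨fun y hy => ?_, hchain'⟩
      have : y ∈ l := List.mem_of_mem_head? hy
      have : y ∈ c.erase g := by rw [← hl]; simpa using this
      exact hleast y (Finset.mem_of_mem_erase this)
include hanti in
lemma antichain_cover (C : List (Finset α)) (hC : ∀ c ∈ C, IsChainF le c)
    (A : Finset α) (hA : IsAntichainF le A) (hcov : ∀ x ∈ A, ∃ c ∈ C, x ∈ c) :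
    A.card ≤ C.length ∧
      (A.card = C.length → ∀ i < C.length, ∃ x ∈ A, x ∈ C.getD i ∅) := by
  set f : α → ℕ := fun x =>
    if h : ∃ i, i < C.length ∧ x ∈ C.getD i ∅ then h.choose else 0 with hf
  have hmaps : ∀ x ∈ A, f x < C.length ∧ x ∈ C.getD (f x) ∅ := by
    intro x hx
    obtain ⟨c, hc, hxc⟩ := hcov x hx
    obtain ⟨i, hi, hci⟩ := List.mem_iff_getElem.mp hc
    have h : ∃ i, i < C.length ∧ x ∈ C.getD i ∅ :=
      ⟨i, hi, by rw [List.getD_eq_getElem C ∅ hi, hci]; exact hxc⟩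
    rw [hf]; simp only [dif_pos h]
    exact h.choose_spec
  have hinj : Set.InjOn f A := by
    intro x hx y hy hfxy
    have hx' := hmaps x hx
    have hy' := hmaps y hy
    rw [hfxy] at hx'
    have hcmem : C.getD (f y) ∅ ∈ C := by
      rw [List.getD_eq_getElem C ∅ hy'.1]; exact List.getElem_mem _
    rcases hC _ hcmem x hx'.2 y hy'.2 with h | h
    · exact hA x hx y hy h
    · exact (hA y hy x hx h).symm
  have hsub : Finset.image f A ⊆ Finset.range C.length := by
    intro i hi
    obtain ⟨x, hx, rfl⟩ := Finset.mem_image.mp hi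
    exact Finset.mem_range.mpr (hmaps x hx).1
  have hcard : A.card ≤ C.length := by
    calc A.card = (Finset.image f A).card := (Finset.card_image_of_injOn hinj).symm
    _ ≤ (Finset.range C.length).card := Finset.card_le_card hsub
    _ = C.length := Finset.card_range _
  refine ⟨hcard, fun heq i hi => ?_⟩
  have himg : Finset.image f A = Finset.range C.length := by
    apply Finset.eq_of_subset_of_card_le hsub
    rw [Finset.card_range, Finset.card_image_of_injOn hinj, heq]
  have : i ∈ Finset.image f A := by rw [himg]; exact Finset.mem_range.mpr hi
  obtain ⟨x, hx, rfl⟩ := Finset.mem_image.mp this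
  exact ⟨x, hx, (hmaps x hx).2⟩

include htrans hanti hrefl in
lemma dilworthF : ∀ (n : ℕ) (S : Finset α), S.card ≤ n →
    ∃ C : List (Finset α), C.Pairwise Disjoint ∧
      (∀ c ∈ C, c.Nonempty ∧ c ⊆ S ∧ IsChainF le c) ∧
      (∀ x ∈ S, ∃ c ∈ C, x ∈ c) ∧ C.length ≤ widthF le S := by
  intro n
  induction n with
  | zero =>
    intro S hc
    rw [Finset.card_eq_zero.mp (Nat.le_zero.mp hc)]
    exact ⟨[], by simp, by simp, by simp, by simp⟩
  | succ n ih =>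
    intro S hc
    rcases S.eq_empty_or_nonempty with rfl | hSne
    · exact ⟨[], by simp, by simp, by simp, by simp⟩
    obtain ⟨m, hmS, hmax⟩ := exists_maximalF le htrans hanti S.card S le_rfl hSne
    set S' := S.erase m with hS'
    have hS'sub : S' ⊆ S := Finset.erase_subset _ _
    have hS'c : S'.card ≤ n := by
      have h1 : S'.card = S.card - 1 := by rw [hS']; exact Finset.card_erase_of_mem hmS
      have h2 : 1 ≤ S.card := Finset.card_pos.mpr hSne
      omega
    obtain ⟨C', hdisj, hprops, hcover, hlen⟩ := ih S' hS'c
    set k := C'.length with hkdef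
    have hmemC' : ∀ i < k, C'.getD i ∅ ∈ C' := by
      intro i hi
      rw [List.getD_eq_getElem C' ∅ hi]
      exact List.getElem_mem _
    -- every antichain of S' with card k hits every chain
    have surj : ∀ B ⊆ S', IsAntichainF le B → B.card = k →
        ∀ i < k, ∃ x ∈ B, x ∈ C'.getD i ∅ := by
      intro B hBS hBanti hBk
      exact (antichain_cover le hanti C' (fun c hc => (hprops c hc).2.2) B hBanti
        (fun x hx => hcover x (hBS hx))).2 hBk
    -- k equals the width of S'
    obtain ⟨A0, hA0S, hA0anti, hA0card⟩ := exists_width_antichain le S'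
    have hwk : widthF le S' = k := by
      refine le_antisymm ?_ hlen
      rw [← hA0card]
      exact (antichain_cover le hanti C' (fun c hc => (hprops c hc).2.2) A0 hA0anti
        (fun x hx => hcover x (hA0S hx))).1
    have hA0k : A0.card = k := by rw [hA0card, hwk]
    -- D i : elements of chain i lying in some k-antichain of S'
    set D : ℕ → Finset α := fun i => (C'.getD i ∅).filter
      (fun x => ∃ B ⊆ S', IsAntichainF le B ∧ B.card = k ∧ x ∈ B) with hD
    have hDg : ∀ i, ∃ x, i < k → (x ∈ D i ∧ ∀ y ∈ D i, le y x) := by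
      intro i
      by_cases hi : i < k
      · have hDchain : IsChainF le (D i) := by
          intro x hx y hy
          exact (hprops _ (hmemC' i hi)).2.2 x (Finset.mem_of_mem_filter _ hx)
            y (Finset.mem_of_mem_filter _ hy)
        have hDne : (D i).Nonempty := by
          obtain ⟨x, hxA0, hxc⟩ := surj A0 hA0S hA0anti hA0k i hi
          exact ⟨x, Finset.mem_filter.mpr ⟨hxc, A0, hA0S, hA0anti, hA0k, hxA0⟩⟩
        obtain ⟨g, hg, hgr⟩ := exists_greatestF le htrans hanti hrefl (D i) hDchain hDne
        exact ⟨g, fun _ => ⟨hg, hgr⟩⟩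
      · exact ⟨m, fun h => absurd h hi⟩
    choose a ha using hDg
    have haC : ∀ i (hi : i < k), a i ∈ C'.getD i ∅ :=
      fun i hi => Finset.mem_of_mem_filter _ ((ha i hi).1)
    have haS' : ∀ i (hi : i < k), a i ∈ S' :=
      fun i hi => (hprops _ (hmemC' i hi)).2.1 (haC i hi)
    have haB : ∀ i (hi : i < k), ∃ B ⊆ S', IsAntichainF le B ∧ B.card = k ∧ a i ∈ B :=
      fun i hi => (Finset.mem_filter.mp (ha i hi).1).2
    have hagr : ∀ i (hi : i < k), ∀ y ∈ D i, le y (a i) := fun i hi => (ha i hi).2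
    by_cases hcase : ∃ i < k, le (a i) m
    · -- Case 2 : remove the chain K and recurse
      obtain ⟨i, hik, him⟩ := hcase
      set K := insert m ((C'.getD i ∅).filter (fun x => le x (a i))) with hK
      have hKS : K ⊆ S := by
        intro x hx
        rcases Finset.mem_insert.mp hx with rfl | hx'
        · exact hmS
        · exact hS'sub ((hprops _ (hmemC' i hik)).2.1 (Finset.mem_of_mem_filter _ hx'))
      have hKchain : IsChainF le K := by
        intro x hx y hy
        rcases Finset.mem_insert.mp hx with rfl | hx' <;>
          rcases Finset.mem_insert.mp hy with h | hy'
        · rw [h]; exact Or.inl (hrefl _)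
        · exact Or.inr (htrans (Finset.mem_filter.mp hy').2 him)
        · subst h; exact Or.inl (htrans (Finset.mem_filter.mp hx').2 him)
        · exact (hprops _ (hmemC' i hik)).2.2 x (Finset.mem_of_mem_filter _ hx')
            y (Finset.mem_of_mem_filter _ hy')
      have hmK : m ∈ K := Finset.mem_insert_self _ _
      have hSKc : (S \ K).card ≤ n := by
        have hsub : S \ K ⊆ S := Finset.sdiff_subset
        have := Finset.card_lt_card ((Finset.ssubset_iff_of_subset hsub).mpr ⟨m, hmS, fun h => (Finset.mem_sdiff.mp h).2 hmK⟩)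
        omega
      obtain ⟨C'', hdisj'', hprops'', hcover'', hlen''⟩ := ih (S \ K) hSKc
      have hwlt : widthF le (S \ K) < k := by
        by_contra hge
        push_neg at hge
        obtain ⟨B, hBS, hBanti, hBcard⟩ := exists_width_antichain le (S \ K)
        obtain ⟨B', hB'B, hB'card⟩ := Finset.exists_subset_card_eq (s := B) (n := k) (hBcard ▸ hge)
        have hB'S' : B' ⊆ S' := by
          intro x hx
          have hxSK := hBS (hB'B hx)
          rw [Finset.mem_sdiff] at hxSK
          refine Finset.mem_erase.mpr ⟨fun h => hxSK.2 (h ▸ hmK), hxSK.1⟩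
        have hB'anti : IsAntichainF le B' := fun x hx y hy => hBanti x (hB'B hx) y (hB'B hy)
        obtain ⟨x, hxB', hxc⟩ := surj B' hB'S' hB'anti hB'card i hik
        have hxD : x ∈ D i := Finset.mem_filter.mpr ⟨hxc, B', hB'S', hB'anti, hB'card, hxB'⟩
        have hxK : x ∈ K := Finset.mem_insert.mpr (Or.inr
          (Finset.mem_filter.mpr ⟨hxc, hagr i hik x hxD⟩))
        exact (Finset.mem_sdiff.mp (hBS (hB'B hxB'))).2 hxK
      refine ⟨K :: C'', ?_, ?_, ?_, ?_⟩
      · rw [List.pairwise_cons]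
        refine ⟨fun c hc => ?_, hdisj''⟩
        have hcsub := (hprops'' c hc).2.1
        exact Finset.disjoint_left.mpr (fun x hxK hxc =>
          (Finset.mem_sdiff.mp (hcsub hxc)).2 hxK)
      · intro c hc
        rcases List.mem_cons.mp hc with rfl | hc'
        · exact ⟨⟨m, hmK⟩, hKS, hKchain⟩
        · obtain ⟨h1, h2, h3⟩ := hprops'' c hc'
          exact ⟨h1, h2.trans Finset.sdiff_subset, h3⟩
      · intro x hx
        by_cases hxK : x ∈ K
        · exact ⟨K, List.mem_cons_self, hxK⟩
        · obtain ⟨c, hc, hxc⟩ := hcover'' x (Finset.mem_sdiff.mpr ⟨hx, hxK⟩)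
          exact ⟨c, List.mem_cons_of_mem _ hc, hxc⟩
      · have h1 : (K :: C'').length = C''.length + 1 := rfl
        have h2 : k ≤ widthF le S := hwk ▸ widthF_mono le hS'sub
        omega
    · -- Case 1 : a's together with m form a (k+1)-antichain
      push_neg at hcase
      set A : Finset α := insert m ((Finset.range k).image a) with hA
      have haneq : ∀ i (hi : i < k), a i ≠ m := by
        intro i hi h
        exact (Finset.mem_erase.mp (haS' i hi)).1 h
      have hAanti : IsAntichainF le A := by
        intro x hx y hy hxy
        rcases Finset.mem_insert.mp hx with rfl | hx' <;>
          rcases Finset.mem_insert.mp hy with h | hy'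
        · rw [h]
        · obtain ⟨j, hjr, rfl⟩ := Finset.mem_image.mp hy'
          rw [Finset.mem_range] at hjr
          exact absurd (hmax _ (hS'sub (haS' j hjr)) hxy) (haneq j hjr)
        · subst h
          obtain ⟨j, hjr, rfl⟩ := Finset.mem_image.mp hx'
          rw [Finset.mem_range] at hjr
          exact absurd hxy (hcase j hjr)
        · obtain ⟨i, hir, rfl⟩ := Finset.mem_image.mp hx'
          obtain ⟨j, hjr, rfl⟩ := Finset.mem_image.mp hy'
          rw [Finset.mem_range] at hir hjr
          obtain ⟨B, hBS, hBanti, hBk, hajB⟩ := haB j hjr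
          obtain ⟨x0, hx0B, hx0c⟩ := surj B hBS hBanti hBk i hir
          have hx0D : x0 ∈ D i := Finset.mem_filter.mpr ⟨hx0c, B, hBS, hBanti, hBk, hx0B⟩
          have h1 : le x0 (a j) := htrans (hagr i hir x0 hx0D) hxy
          have h2 : x0 = a j := hBanti x0 hx0B (a j) hajB h1
          have hajD : a j ∈ D i := h2 ▸ hx0D
          exact hanti hxy (hagr i hir (a j) hajD)
      have hAS : A ⊆ S := by
        intro x hx
        rcases Finset.mem_insert.mp hx with rfl | hx'
        · exact hmS
        · obtain ⟨j, hjr, rfl⟩ := Finset.mem_image.mp hx'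
          rw [Finset.mem_range] at hjr
          exact hS'sub (haS' j hjr)
      have hainj : Set.InjOn a (Finset.range k) := by
        intro i hi j hj hij
        simp only [Finset.coe_range, Set.mem_Iio] at hi hj
        by_contra hne
        have hd : Disjoint (C'.getD i ∅) (C'.getD j ∅) := by
          rcases Nat.lt_or_ge i j with h | h
          · have := List.pairwise_iff_getElem.mp hdisj i j hi hj h
            rwa [List.getD_eq_getElem C' ∅ hi, List.getD_eq_getElem C' ∅ hj]
          · have hlt : j < i := lt_of_le_of_ne h (Ne.symm hne)
            have := List.pairwise_iff_getElem.mp hdisj j i hj hi hlt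
            rw [List.getD_eq_getElem C' ∅ hi, List.getD_eq_getElem C' ∅ hj]
            exact this.symm
        exact Finset.disjoint_left.mp hd (haC i hi) (hij ▸ haC j hj)
      have hAcard : A.card = k + 1 := by
        rw [hA, Finset.card_insert_of_notMem, Finset.card_image_of_injOn hainj,
          Finset.card_range]
        intro hmem
        obtain ⟨j, hjr, hje⟩ := Finset.mem_image.mp hmem
        rw [Finset.mem_range] at hjr
        exact haneq j hjr hje
      have hwidth : k + 1 ≤ widthF le S := hAcard ▸ antichain_card_le_width le hAS hAanti
      refine ⟨C' ++ [{m}], ?_, ?_, ?_, ?_⟩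
      · rw [List.pairwise_append]
        refine ⟨hdisj, by simp, fun c hc c' hc' => ?_⟩
        rw [List.mem_singleton] at hc'
        subst hc'
        refine Finset.disjoint_right.mpr ?_
        intro x hx
        rw [Finset.mem_singleton] at hx
        subst hx
        exact fun hmc => (Finset.mem_erase.mp ((hprops c hc).2.1 hmc)).1 rfl
      · intro c hc
        rcases List.mem_append.mp hc with hc' | hc'
        · obtain ⟨h1, h2, h3⟩ := hprops c hc'
          exact ⟨h1, h2.trans hS'sub, h3⟩
        · rw [List.mem_singleton] at hc'
          subst hc'
          refine ⟨⟨m, Finset.mem_singleton_self m⟩, by simpa using hmS, ?_⟩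
          intro x hx y hy
          rw [Finset.mem_singleton] at hx hy
          subst hx; subst hy
          exact Or.inl (hrefl _)
      · intro x hx
        by_cases hxm : x = m
        · exact ⟨{m}, List.mem_append_right _ (List.mem_singleton_self _),
            by simp [hxm]⟩
        · obtain ⟨c, hc, hxc⟩ := hcover x (Finset.mem_erase.mpr ⟨hxm, hx⟩)
          exact ⟨c, List.mem_append_left _ hc, hxc⟩
      · rw [List.length_append, List.length_singleton]
        exact hwidth

end D

section G
variable {V : Type*} (E : V → V → Prop)

lemma chain'_head_le : ∀ (l : List V), l.Chain' E → ∀ u, l.head? = some u →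
    ∀ x ∈ l, Relation.ReflTransGen E u x := by
  intro l
  induction l with
  | nil => simp
  | cons a rest ih =>
    intro hc u hu x hx
    simp only [List.head?_cons, Option.some.injEq] at hu
    subst hu
    rcases List.mem_cons.mp hx with rfl | hx'
    · exact Relation.ReflTransGen.refl
    · rcases rest with _ | ⟨b, r⟩
      · simp at hx'
      · have hE : E a b := (List.isChain_cons_cons.mp hc).1
        exact Relation.ReflTransGen.head hE (ih hc.tail b rfl x hx')

lemma chain'_le_last : ∀ (l : List V), l.Chain' E → ∀ v, l.getLast? = some v →
    ∀ x ∈ l, Relation.ReflTransGen E x v := by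
  intro l
  induction l with
  | nil => simp
  | cons a rest ih =>
    intro hc v hv x hx
    rcases rest with _ | ⟨b, r⟩
    · simp only [List.getLast?_singleton, Option.some.injEq] at hv
      simp only [List.mem_singleton] at hx
      subst hv; subst hx
      exact Relation.ReflTransGen.refl
    · have hv' : (b :: r).getLast? = some v := by
        rwa [List.getLast?_cons_cons] at hv
      rcases List.mem_cons.mp hx with rfl | hx'
      · exact Relation.ReflTransGen.head (List.isChain_cons_cons.mp hc).1
          (ih hc.tail v hv' b List.mem_cons_self)
      · exact ih hc.tail v hv' x hx'

lemma chain'_comparable_s3 (l : List V) (hc : l.Chain' E) {x y : V} (hx : x ∈ l) (hy : y ∈ l) :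
    Relation.ReflTransGen E x y ∨ Relation.ReflTransGen E y x := by
  induction l with
  | nil => simp at hx
  | cons a rest ih =>
    rcases List.mem_cons.mp hx with rfl | hx'
    · exact Or.inl (chain'_head_le E _ hc x rfl y hy)
    · rcases List.mem_cons.mp hy with rfl | hy'
      · exact Or.inr (chain'_head_le E _ hc y rfl x (List.mem_cons_of_mem _ hx'))
      · exact ih hc.tail hx' hy'

lemma exists_nodup_path {u v : V} (h : Relation.ReflTransGen E u v) :
    ∃ l : List V, l.Chain' E ∧ l.Nodup ∧ l.head? = some u ∧ l.getLast? = some v := by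
  induction h using Relation.ReflTransGen.head_induction_on with
  | refl => exact ⟨[v], List.isChain_singleton _, by simp, by simp, by simp⟩
  | head hE _ ih =>
    rename_i a c _
    obtain ⟨l, hc, hnd, hh, hl⟩ := ih
    by_cases ha : a ∈ l
    · obtain ⟨s1, s2, rfl⟩ := List.append_of_mem ha
      refine ⟨a :: s2, hc.suffix ⟨s1, rfl⟩, hnd.sublist ((List.suffix_append s1 (a :: s2)).sublist),
        rfl, ?_⟩
      rw [← hl]
      exact (List.getLast?_append_of_ne_nil s1 (by simp)).symm
    · rcases l with _ | ⟨b, bs⟩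
      · simp at hh
      · simp only [List.head?_cons, Option.some.injEq] at hh
        subst hh
        exact ⟨a :: b :: bs, List.isChain_cons_cons.mpr ⟨hE, hc⟩, List.nodup_cons.mpr ⟨ha, hnd⟩,
          rfl, by rwa [List.getLast?_cons_cons]⟩
lemma glue_paths {p q : List V} {b : V}
    (hanti : ∀ {x y : V}, Relation.ReflTransGen E x y → Relation.ReflTransGen E y x → x = y)
    (hp : p.Chain' E) (hq : q.Chain' E) (hpn : p.Nodup) (hqn : q.Nodup)
    (hpl : p.getLast? = some b) (hqh : q.head? = some b) :
    ∃ r : List V, r.Chain' E ∧ r.Nodup ∧ r.head? = p.head? ∧ r.getLast? = q.getLast? ∧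
      ∀ x : V, x ∈ r ↔ (x ∈ p ∨ x ∈ q) := by
  rcases q with _ | ⟨b', t⟩
  · simp at hqh
  simp only [List.head?_cons, Option.some.injEq] at hqh
  rw [hqh] at hq hqn ⊢
  have hbp : b ∈ p := List.mem_of_mem_getLast? (by rw [hpl]; rfl)
  refine ⟨p ++ t, ?_, ?_, ?_, ?_, ?_⟩
  · apply List.IsChain.append hp hq.tail
    intro x hx y hy
    rw [hpl, Option.mem_some_iff] at hx
    subst hx
    exact List.isChain_cons.mp hq |>.1 y hy
  · rw [List.nodup_append]
    refine ⟨hpn, (List.nodup_cons.mp hqn).2, ?_⟩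
    intro x hxp y hxt hxy
    subst hxy
    have h1 : Relation.ReflTransGen E x b := chain'_le_last E p hp b hpl x hxp
    have h2 : Relation.ReflTransGen E b x :=
      chain'_head_le E (b :: t) hq b rfl x (List.mem_cons_of_mem _ hxt)
    exact (List.nodup_cons.mp hqn).1 ((hanti h1 h2) ▸ hxt)
  · rcases p with _ | _
    · simp at hpl
    · simp
  · rcases t with _ | ⟨c, r⟩
    · simp only [List.append_nil]
      rw [hpl, List.getLast?_singleton]
    · rw [List.getLast?_cons_cons, List.getLast?_append_of_ne_nil p (by simp)]
  · intro x
    simp only [List.mem_append, List.mem_cons]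
    constructor
    · rintro (h | h)
      · exact Or.inl h
      · exact Or.inr (Or.inr h)
    · rintro (h | rfl | h)
      · exact Or.inl h
      · exact Or.inl hbp
      · exact Or.inr h

lemma build_path {hanti : ∀ {x y : V}, Relation.ReflTransGen E x y → Relation.ReflTransGen E y x → x = y} :
    ∀ (L : List V), L ≠ [] → L.Chain' (Relation.ReflTransGen E) →
    ∃ q : List V, q.Chain' E ∧ q.Nodup ∧ q.head? = L.head? ∧ q.getLast? = L.getLast? ∧
      ∀ g ∈ L, g ∈ q := by
  intro L
  induction L with
  | nil => simp
  | cons g L' ih =>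
    intro _ hc
    rcases L' with _ | ⟨g', L''⟩
    · exact ⟨[g], List.isChain_singleton _, by simp, by simp, by simp, by simp⟩
    · have hstep : Relation.ReflTransGen E g g' := (List.isChain_cons_cons.mp hc).1
      obtain ⟨q', hq'c, hq'n, hq'h, hq'l, hq'mem⟩ := ih (by simp) hc.tail
      obtain ⟨p, hpc, hpn, hph, hpl⟩ := exists_nodup_path E hstep
      have hq'h' : q'.head? = some g' := by rw [hq'h]; rfl
      obtain ⟨r, hrc, hrn, hrh, hrl, hrmem⟩ :=
        glue_paths E hanti hpc hq'c hpn hq'n hpl hq'h'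
      refine ⟨r, hrc, hrn, by rw [hrh, hph]; rfl, by rw [hrl, hq'l, List.getLast?_cons_cons], ?_⟩
      intro x hx
      rcases List.mem_cons.mp hx with rfl | hx'
      · exact (hrmem x).mpr (Or.inl (List.mem_of_mem_head? (by rw [hph]; rfl)))
      · exact (hrmem x).mpr (Or.inr (hq'mem x hx'))

end G



/-- A directed path from `s` to `t`: a duplicate-free list of vertices starting at
`s`, ending at `t`, in which each consecutive pair is related by `E`. -/
def IsSTPath {V : Type*} (E : V → V → Prop) (s t : V) (p : List V) : Prop :=
  p.Chain' E ∧ p.Nodup ∧ p.head? = some s ∧ p.getLast? = some t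

/-- **Theorem 1(1) of Eriksson et al..** Let `V` be a finite vertex
type, `E` an acyclic directed graph relation (transitive closure irreflexive),
and `s`, `t` vertices such that every vertex lies on some directed `s`–`t` path.
Then the minimum cardinality of a set of `s`–`t` paths covering all vertices
equals the maximum cardinality of a reachability antichain (a finite set of
vertices no two distinct elements of which are reachable from one another under
the reflexive-transitive closure of `E`). -/
theorem min_path_cover_eq_max_antichain {V : Type*} [Fintype V] [DecidableEq V]
    (E : V → V → Prop) (hac : Irreflexive (Relation.TransGen E)) (s t : V)
    (hcov : ∀ v : V, ∃ p : List V, IsSTPath E s t p ∧ v ∈ p) :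
    ∃ k : ℕ,
      IsLeast {m : ℕ | ∃ P : Finset (List V),
          (∀ p ∈ P, IsSTPath E s t p) ∧ (∀ v : V, ∃ p ∈ P, v ∈ p) ∧
          P.card = m} k ∧
      IsGreatest {m : ℕ | ∃ Q : Finset V,
          (∀ q ∈ Q, ∀ q' ∈ Q, q ≠ q' → ¬ Relation.ReflTransGen E q q') ∧
          Q.card = m} k := by
  classical
  set le : V → V → Prop := Relation.ReflTransGen E with hle
  have htrans : ∀ {a b c : V}, le a b → le b c → le a c := fun h1 h2 => h1.trans h2
  have hanti : ∀ {a b : V}, le a b → le b a → a = b := by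
    intro a b hab hba
    rcases hab.cases_head with h | ⟨c, hac', hcb⟩
    · exact h
    · exact absurd (Relation.TransGen.head' hac' (hcb.trans hba)) (hac a)
  have hrefl : ∀ a : V, le a a := fun a => Relation.ReflTransGen.refl
  have hst : ∀ v : V, le s v ∧ le v t := by
    intro v
    obtain ⟨p, hp, hv⟩ := hcov v
    exact ⟨chain'_head_le E p hp.1 s hp.2.2.1 v hv,
      chain'_le_last E p hp.1 t hp.2.2.2 v hv⟩
  set k := widthF le (Finset.univ : Finset V) with hk
  obtain ⟨A, hAS, hAanti, hAcard⟩ := exists_width_antichain le (Finset.univ : Finset V)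
  -- lower bound: every cover has at least k paths
  have hlb : ∀ m, (∃ P : Finset (List V),
      (∀ p ∈ P, IsSTPath E s t p) ∧ (∀ v : V, ∃ p ∈ P, v ∈ p) ∧ P.card = m) → k ≤ m := by
    rintro m ⟨P, hPpath, hPcov, rfl⟩
    set C : List (Finset V) := P.toList.map List.toFinset with hC
    have hCchain : ∀ c ∈ C, IsChainF le c := by
      intro c hc
      obtain ⟨p, hpP, rfl⟩ := List.mem_map.mp hc
      intro x hx y hy
      exact chain'_comparable_s3 E p (hPpath p (Finset.mem_toList.mp hpP)).1
        (List.mem_toFinset.mp hx) (List.mem_toFinset.mp hy)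
    have hAcov : ∀ x ∈ A, ∃ c ∈ C, x ∈ c := by
      intro x _
      obtain ⟨p, hpP, hxp⟩ := hPcov x
      exact ⟨p.toFinset, List.mem_map.mpr ⟨p, Finset.mem_toList.mpr hpP, rfl⟩,
        List.mem_toFinset.mpr hxp⟩
    have := (antichain_cover le hanti C hCchain A hAanti hAcov).1
    rwa [hAcard, hC, List.length_map, Finset.length_toList] at this
  -- construct a cover with at most k paths
  obtain ⟨C, hCdisj, hCprops, hCcov, hClen⟩ :=
    dilworthF le htrans hanti hrefl (Fintype.card V) Finset.univ (by simp)
  have key : ∀ c : Finset V, ∃ p : List V,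
      IsChainF le c → (IsSTPath E s t p ∧ ∀ x ∈ c, x ∈ p) := by
    intro c
    by_cases hchain : IsChainF le c
    · obtain ⟨l, hlf, hlc⟩ := sort_chainF le htrans hanti hrefl c.card c le_rfl hchain
      set L : List V := s :: (l ++ [t]) with hL
      have hLc : L.Chain' le := by
        rw [hL]; change List.IsChain _ _; rw [List.isChain_cons]
        constructor
        · intro y hy
          exact (hst y).1
        · apply List.IsChain.append hlc (by simp)
          intro x hx y hy
          simp only [List.head?_cons, Option.mem_some_iff] at hy
          subst hy
          exact (hst x).2
      obtain ⟨q, hqc, hqn, hqh, hql, hqmem⟩ := build_path E (hanti := hanti) L (by simp) hLc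
      refine ⟨q, fun _ => ⟨⟨hqc, hqn, ?_, ?_⟩, ?_⟩⟩
      · rw [hqh]; rfl
      · rw [hql, hL]
        show ((s :: l) ++ [t]).getLast? = some t
        rw [List.getLast?_append_of_ne_nil _ (by simp)]
        rfl
      · intro x hx
        apply hqmem
        rw [hL]
        simp only [List.mem_cons, List.mem_append, List.mem_singleton]
        exact Or.inr (Or.inl (by rwa [← List.mem_toFinset, hlf]))
    · exact ⟨[], fun h => absurd h hchain⟩
  choose f hf using key
  set P : Finset (List V) := (C.map f).toFinset with hP
  have hPpath : ∀ p ∈ P, IsSTPath E s t p := by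
    intro p hp
    obtain ⟨c, hc, rfl⟩ := List.mem_map.mp (List.mem_toFinset.mp hp)
    exact (hf c (hCprops c hc).2.2).1
  have hPcov : ∀ v : V, ∃ p ∈ P, v ∈ p := by
    intro v
    obtain ⟨c, hc, hvc⟩ := hCcov v (Finset.mem_univ v)
    exact ⟨f c, List.mem_toFinset.mpr (List.mem_map.mpr ⟨c, hc, rfl⟩),
      (hf c (hCprops c hc).2.2).2 v hvc⟩
  have hPcard : P.card = k := by
    have h1 : P.card ≤ k := by
      calc P.card ≤ (C.map f).length := List.toFinset_card_le _
      _ = C.length := List.length_map _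
      _ ≤ k := hClen
    exact le_antisymm h1 (hlb P.card ⟨P, hPpath, hPcov, rfl⟩)
  refine ⟨k, ⟨⟨P, hPpath, hPcov, hPcard⟩, fun m hm => hlb m hm⟩, ⟨A, ?_, hAcard⟩, ?_⟩
  · intro q hq q' hq' hne hle'
    exact hne (hAanti q hq q' hq' hle')
  · rintro m ⟨Q, hQ, rfl⟩
    refine antichain_card_le_width le (Finset.subset_univ Q) ?_
    intro x hx y hy hxy
    by_contra hne
    exact hQ x hx y hy hne hxy
end

section
/- Let α be a finite partially ordered type. Call a finite set M of pairs (a, b) ∈ α × α with a < b a strict matching if distinct pairs of M have distinct first components and distinct second components. Then the minimum number of chains (subsets of α that are totally ordered by ≤) whose union is all of α equals the cardinality of α minus the maximum cardinality of a strict matching. -/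
namespace MinChainCoverAux

attribute [local instance] Classical.propDecidable

variable {α : Type*} [Fintype α] [PartialOrder α] [DecidableEq α]

/-- predecessor map of a matching: send `z` to the unique `a` with `(a, z) ∈ M`,
or to itself if there is none. -/
noncomputable def pmap (M : Finset (α × α)) (z : α) : α :=
  if h : ∃ e ∈ M, e.2 = z then h.choose.1 else z

lemma pmap_mem {M : Finset (α × α)} {z : α} (h : ∃ e ∈ M, e.2 = z) :
    (pmap M z, z) ∈ M := by
  rw [pmap, dif_pos h]
  obtain ⟨he, h2⟩ := h.choose_spec
  have heq : (h.choose.1, z) = h.choose := by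
    refine Prod.ext rfl ?_
    exact h2.symm
  rw [heq]; exact he

lemma pmap_eq_of_not {M : Finset (α × α)} {z : α} (h : ¬ ∃ e ∈ M, e.2 = z) :
    pmap M z = z := dif_neg h

lemma pmap_lt {M : Finset (α × α)} (hlt : ∀ e ∈ M, e.1 < e.2) {z : α}
    (h : ∃ e ∈ M, e.2 = z) : pmap M z < z := hlt _ (pmap_mem h)

lemma pmap_le {M : Finset (α × α)} (hlt : ∀ e ∈ M, e.1 < e.2) (z : α) :
    pmap M z ≤ z := by
  by_cases h : ∃ e ∈ M, e.2 = z
  · exact (pmap_lt hlt h).le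
  · rw [pmap_eq_of_not h]

lemma pmap_iter_le {M : Finset (α × α)} (hlt : ∀ e ∈ M, e.1 < e.2) (k : ℕ) (z : α) :
    (pmap M)^[k] z ≤ z := by
  induction k with
  | zero => exact le_rfl
  | succ n ih =>
      rw [Function.iterate_succ_apply']
      exact (pmap_le hlt _).trans ih

lemma pmap_iter_le_iter {M : Finset (α × α)} (hlt : ∀ e ∈ M, e.1 < e.2) {i j : ℕ}
    (hij : i ≤ j) (z : α) : (pmap M)^[j] z ≤ (pmap M)^[i] z := by
  have : (pmap M)^[j] z = (pmap M)^[j - i] ((pmap M)^[i] z) := by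
    rw [← Function.iterate_add_apply]
    congr 1
    omega
  rw [this]
  exact pmap_iter_le hlt _ _

/-- Elements with equal iterated predecessors are comparable. -/
lemma comparable_of_iter_eq {M : Finset (α × α)} (hlt : ∀ e ∈ M, e.1 < e.2)
    (hfst : Set.InjOn Prod.fst (M : Set (α × α))) :
    ∀ n i j x y, i + j ≤ n → (pmap M)^[i] x = (pmap M)^[j] y → x ≤ y ∨ y ≤ x := by
  intro n
  induction n with
  | zero =>
      intro i j x y hn h
      have hi : i = 0 := by omega
      have hj : j = 0 := by omega
      subst hi; subst hj
      exact Or.inl (le_of_eq h)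
  | succ n ih =>
      intro i j x y hn h
      match i, j with
      | 0, j =>
          left
          calc x = (pmap M)^[j] y := h
          _ ≤ y := pmap_iter_le hlt _ _
      | i, 0 =>
          right
          calc y = (pmap M)^[i] x := h.symm
          _ ≤ x := pmap_iter_le hlt _ _
      | (i+1), (j+1) =>
          set u := (pmap M)^[i] x with hu
          set v := (pmap M)^[j] y with hv
          have hpu : (pmap M)^[i+1] x = pmap M u := Function.iterate_succ_apply' _ _ _
          have hpv : (pmap M)^[j+1] y = pmap M v := Function.iterate_succ_apply' _ _ _
          by_cases huv : u = v
          · exact ih i j x y (by omega) (by rw [hu, hv] at huv; exact huv)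
          · by_cases hus : ∃ e ∈ M, e.2 = u
            · by_cases hvs : ∃ e ∈ M, e.2 = v
              · exfalso
                apply huv
                have h1 : (pmap M u, u) ∈ M := pmap_mem hus
                have h2 : (pmap M v, v) ∈ M := pmap_mem hvs
                have heq : pmap M u = pmap M v := by rw [← hpu, ← hpv, h]
                have := hfst (Finset.mem_coe.mpr h1) (Finset.mem_coe.mpr h2) (by simpa using heq)
                exact congrArg Prod.snd this
              · -- v is fixed
                have hfix : pmap M v = v := pmap_eq_of_not hvs
                apply ih (i+1) j x y (by omega)
                rw [h, hpv, hfix]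
            · -- u is fixed
              have hfix : pmap M u = u := pmap_eq_of_not hus
              apply ih i (j+1) x y (by omega)
              rw [← h, hpu, hfix]

noncomputable def root (M : Finset (α × α)) (x : α) : α := (pmap M)^[Fintype.card α] x

lemma pmap_root {M : Finset (α × α)} (hlt : ∀ e ∈ M, e.1 < e.2) (x : α) :
    pmap M (root M x) = root M x := by
  set n := Fintype.card α with hn
  have key : ∀ i j : ℕ, i < j → i ≤ n → (pmap M)^[i] x = (pmap M)^[j] x →
      pmap M (root M x) = root M x := by
    intro i j hij hin h
    have hstep : (pmap M)^[i + 1] x = (pmap M)^[i] x := by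
      have h1 : (pmap M)^[j] x ≤ (pmap M)^[i + 1] x := pmap_iter_le_iter hlt (by omega) x
      have h2 : (pmap M)^[i + 1] x ≤ (pmap M)^[i] x := pmap_iter_le_iter hlt (by omega) x
      exact le_antisymm h2 (h ▸ h1)
    have hfix : pmap M ((pmap M)^[i] x) = (pmap M)^[i] x := by
      rw [← Function.iterate_succ_apply' (pmap M) i x]; exact hstep
    have hroot : root M x = (pmap M)^[i] x := by
      rw [root, ← hn]
      have hni : n = i + (n - i) := by omega
      rw [hni, add_comm, Function.iterate_add_apply]
      exact Function.iterate_fixed hfix _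
    rw [hroot, hfix]
  have hcard : Fintype.card α < Fintype.card (Fin (n + 1)) := by simp [hn]
  obtain ⟨a, b, hab, h⟩ := Fintype.exists_ne_map_eq_of_card_lt
    (fun k : Fin (n + 1) => (pmap M)^[(k : ℕ)] x) hcard
  have ha := a.isLt
  have hb := b.isLt
  rcases Nat.lt_or_ge (a : ℕ) (b : ℕ) with hab' | hab'
  · exact key a b hab' (by omega) h
  · have hba : (b : ℕ) < (a : ℕ) :=
      lt_of_le_of_ne hab' (fun hh => hab (Fin.ext hh.symm))
    exact key b a hba (by omega) h.symm

lemma root_not_snd {M : Finset (α × α)} (hlt : ∀ e ∈ M, e.1 < e.2) (x : α) :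
    ¬ ∃ e ∈ M, e.2 = root M x := by
  intro h
  exact absurd (pmap_root hlt x) (pmap_lt hlt h).ne

/-- From a strict matching, a chain cover of size `card α - M.card`. -/
lemma exists_cover {M : Finset (α × α)} (hlt : ∀ e ∈ M, e.1 < e.2)
    (hfst : Set.InjOn Prod.fst (M : Set (α × α)))
    (hsnd : Set.InjOn Prod.snd (M : Set (α × α))) :
    ∃ C : Finset (Finset α), (∀ c ∈ C, IsChain (· ≤ ·) (c : Set α)) ∧
      (∀ a : α, ∃ c ∈ C, a ∈ c) ∧ C.card = Fintype.card α - M.card := by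
  set R : Finset α := Finset.univ.filter (fun r => ¬ ∃ e ∈ M, e.2 = r) with hR
  set fib : α → Finset α := fun r => Finset.univ.filter (fun y => root M y = r) with hfib
  have hrootR : ∀ r ∈ R, root M r = r := by
    intro r hr
    rw [hR, Finset.mem_filter] at hr
    have : pmap M r = r := pmap_eq_of_not hr.2
    exact Function.iterate_fixed this _
  refine ⟨R.image fib, ?_, ?_, ?_⟩
  · intro c hc
    obtain ⟨r, _, rfl⟩ := Finset.mem_image.mp hc
    intro x hx y hy hxy
    rw [Finset.mem_coe, hfib, Finset.mem_filter] at hx hy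
    have : (pmap M)^[Fintype.card α] x = (pmap M)^[Fintype.card α] y := by
      have := hx.2.trans hy.2.symm
      exact this
    exact comparable_of_iter_eq hlt hfst (Fintype.card α + Fintype.card α) _ _ _ _ le_rfl this
  · intro a
    refine ⟨fib (root M a), Finset.mem_image_of_mem _ ?_, ?_⟩
    · rw [hR, Finset.mem_filter]
      exact ⟨Finset.mem_univ _, root_not_snd hlt a⟩
    · rw [hfib, Finset.mem_filter]
      exact ⟨Finset.mem_univ _, rfl⟩
  · have hinj : Set.InjOn fib (R : Set α) := by
      intro r hr r' hr' hrr
      have h1 : r ∈ fib r := by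
        rw [hfib, Finset.mem_filter]
        exact ⟨Finset.mem_univ _, hrootR r hr⟩
      rw [hrr, hfib, Finset.mem_filter] at h1
      rw [← h1.2, hrootR r hr]
    rw [Finset.card_image_of_injOn hinj]
    -- card R = card α - M.card
    have hRcompl : Finset.univ.filter (fun r => ∃ e ∈ M, e.2 = r) = M.image Prod.snd := by
      ext r
      simp only [Finset.mem_filter, Finset.mem_univ, true_and, Finset.mem_image]
    have hadd := Finset.card_filter_add_card_filter_not
      (s := (Finset.univ : Finset α)) (p := fun r => ∃ e ∈ M, e.2 = r)
    have hsndcard : (M.image Prod.snd).card = M.card := Finset.card_image_of_injOn hsnd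
    rw [hRcompl, hsndcard, Finset.card_univ] at hadd
    have : R.card = Fintype.card α - M.card := by
      rw [hR]
      have hMle : M.card ≤ Fintype.card α := by
        calc M.card = (M.image Prod.snd).card := hsndcard.symm
        _ ≤ Finset.univ.card := Finset.card_le_univ _
        _ = Fintype.card α := Finset.card_univ
      omega
    exact this

/-- In a finite nonempty chain there is a least element. -/
lemma chain_exists_least {s : Finset α} (hs : s.Nonempty)
    (hc : ∀ x ∈ s, ∀ y ∈ s, x ≤ y ∨ y ≤ x) : ∃ b ∈ s, ∀ c ∈ s, b ≤ c := by
  obtain ⟨m, hm, hmin⟩ := s.exists_minimal hs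
  refine ⟨m, hm, fun c hcs => ?_⟩
  rcases hc m hm c hcs with h | h
  · exact h
  · rcases lt_or_eq_of_le h with h' | h'
    · exact absurd (hmin hcs h'.le) (not_le_of_gt h')
    · exact le_of_eq h'.symm

/-- From a chain cover of size `j`, a strict matching of size `≥ card α - j`. -/
lemma exists_matching_of_cover (C : Finset (Finset α))
    (hchain : ∀ c ∈ C, IsChain (· ≤ ·) (c : Set α))
    (hcover : ∀ a : α, ∃ c ∈ C, a ∈ c) :
    ∃ M : Finset (α × α), (∀ e ∈ M, e.1 < e.2) ∧
      Set.InjOn Prod.fst (M : Set (α × α)) ∧ Set.InjOn Prod.snd (M : Set (α × α)) ∧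
      Fintype.card α - C.card ≤ M.card := by
  have hch : ∀ a : α, ∃ c, c ∈ C ∧ a ∈ c := by
    intro a; obtain ⟨c, hc, h⟩ := hcover a; exact ⟨c, hc, h⟩
  choose ch chC chmem using hch
  set S : α → Finset α := fun a => Finset.univ.filter (fun b => ch b = ch a ∧ a < b) with hS
  set A : Finset α := Finset.univ.filter (fun a => (S a).Nonempty) with hA
  -- the chains' comparability inside S a
  have hcomp : ∀ a b b', ch b = ch a → ch b' = ch a → b ≤ b' ∨ b' ≤ b := by
    intro a b b' h1 h2
    by_cases hbb : b = b'
    · exact Or.inl hbb.le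
    · exact hchain (ch a) (chC a) (h1 ▸ chmem b) (h2 ▸ chmem b') hbb
  have hleast : ∀ a : {x // x ∈ A}, ∃ b, b ∈ S a.1 ∧ ∀ c ∈ S a.1, b ≤ c := by
    intro ⟨a, ha⟩
    rw [hA, Finset.mem_filter] at ha
    have hc : ∀ x ∈ S a, ∀ y ∈ S a, x ≤ y ∨ y ≤ x := by
      intro x hx y hy
      rw [hS, Finset.mem_filter] at hx hy
      exact hcomp a x y hx.2.1 hy.2.1
    obtain ⟨b, hb, hb2⟩ := chain_exists_least ha.2 hc
    exact ⟨b, hb, hb2⟩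
  choose f hf1 hf2 using hleast
  set M : Finset (α × α) := A.attach.image (fun a : {x // x ∈ A} => (a.1, f a)) with hM
  have hmemS : ∀ a : {x // x ∈ A}, ch (f a) = ch a.1 ∧ a.1 < f a := by
    intro a
    have := hf1 a
    rw [hS, Finset.mem_filter] at this
    exact this.2
  refine ⟨M, ?_, ?_, ?_, ?_⟩
  · intro e he
    rw [hM, Finset.mem_image] at he
    obtain ⟨a, _, rfl⟩ := he
    exact (hmemS a).2
  · intro e he e' he' h
    rw [hM, Finset.mem_coe, Finset.mem_image] at he he'
    obtain ⟨a, _, rfl⟩ := he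
    obtain ⟨a', _, rfl⟩ := he'
    have : a = a' := Subtype.ext h
    rw [this]
  · intro e he e' he' h
    rw [hM, Finset.mem_coe, Finset.mem_image] at he he'
    obtain ⟨a, _, rfl⟩ := he
    obtain ⟨a', _, rfl⟩ := he'
    have hff : f a = f a' := h
    by_cases haa : a.1 = a'.1
    · exact Prod.ext haa h
    · exfalso
      have hcha : ch a'.1 = ch a.1 := by
        rw [← (hmemS a').1, ← hff, (hmemS a).1]
      rcases hcomp a.1 a.1 a'.1 rfl hcha with hle | hle
      · have hlt' : a.1 < a'.1 := lt_of_le_of_ne hle haa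
        have : a'.1 ∈ S a.1 := by
          rw [hS, Finset.mem_filter]
          exact ⟨Finset.mem_univ _, hcha, hlt'⟩
        have h1 := hf2 a a'.1 this
        have h2 := (hmemS a').2
        rw [hff] at h1
        exact absurd (h1.trans_lt h2) (lt_irrefl _)
      · have hlt' : a'.1 < a.1 := lt_of_le_of_ne hle (fun hh => haa hh.symm)
        have : a.1 ∈ S a'.1 := by
          rw [hS, Finset.mem_filter]
          exact ⟨Finset.mem_univ _, hcha.symm, hlt'⟩
        have h1 := hf2 a' a.1 this
        have h2 := (hmemS a).2
        rw [← hff] at h1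
        exact absurd (h1.trans_lt h2) (lt_irrefl _)
  · -- cardinality
    have hMcard : M.card = A.card := by
      rw [hM]
      rw [Finset.card_image_of_injOn, Finset.card_attach]
      intro a _ a' _ h
      exact Subtype.ext (congrArg Prod.fst h)
    have hTle : (Finset.univ.filter (fun a => ¬ (S a).Nonempty)).card ≤ C.card := by
      apply Finset.card_le_card_of_injOn ch
      · intro a ha
        exact chC a
      · intro a ha a' ha' h
        rw [Finset.mem_coe, Finset.mem_filter] at ha ha'
        by_contra haa
        rcases hcomp a a a' rfl h.symm with hle | hle
        · have hlt' : a < a' := lt_of_le_of_ne hle haa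
          apply ha.2
          exact ⟨a', by rw [hS, Finset.mem_filter]; exact ⟨Finset.mem_univ _, h.symm, hlt'⟩⟩
        · have hlt' : a' < a := lt_of_le_of_ne hle (fun hh => haa hh.symm)
          apply ha'.2
          exact ⟨a, by rw [hS, Finset.mem_filter]; exact ⟨Finset.mem_univ _, h, hlt'⟩⟩
    have hadd := Finset.card_filter_add_card_filter_not
      (s := (Finset.univ : Finset α)) (p := fun a => (S a).Nonempty)
    have hAcard : A.card = (Finset.univ : Finset α).card - ((Finset.univ : Finset α).filter (fun a => ¬ (S a).Nonempty)).card := by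
      rw [hA]; omega
    rw [hMcard, hAcard, Finset.card_univ]
    omega

end MinChainCoverAux

open MinChainCoverAux in
/-- For a finite partially ordered type `α`, the minimum number of
chains (subsets totally ordered by `≤`) whose union is all of `α` equals the
cardinality of `α` minus the maximum cardinality of a strict matching, i.e. a
finite set of pairs `(a, b)` with `a < b`, no two sharing a first component and
no two sharing a second component. -/
theorem min_chain_cover_eq_card_sub_max_matching
    {α : Type*} [Fintype α] [PartialOrder α] [DecidableEq α] :
    ∃ k m : ℕ,
      IsLeast {j : ℕ | ∃ C : Finset (Finset α),
          (∀ c ∈ C, IsChain (· ≤ ·) (c : Set α)) ∧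
          (∀ a : α, ∃ c ∈ C, a ∈ c) ∧ C.card = j} k ∧
      IsGreatest {j : ℕ | ∃ M : Finset (α × α),
          (∀ e ∈ M, e.1 < e.2) ∧
          Set.InjOn Prod.fst (M : Set (α × α)) ∧
          Set.InjOn Prod.snd (M : Set (α × α)) ∧ M.card = j} m ∧
      k = Fintype.card α - m := by
  classical
  set Smatch : Set ℕ := {j : ℕ | ∃ M : Finset (α × α),
      (∀ e ∈ M, e.1 < e.2) ∧
      Set.InjOn Prod.fst (M : Set (α × α)) ∧
      Set.InjOn Prod.snd (M : Set (α × α)) ∧ M.card = j} with hSmatch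
  have h0 : (0 : ℕ) ∈ Smatch := ⟨∅, by simp, by simp, by simp, by simp⟩
  have hbd : ∀ j ∈ Smatch, j ≤ Fintype.card α := by
    rintro j ⟨M, hlt, hfst, hsnd, rfl⟩
    calc M.card = (M.image Prod.fst).card := (Finset.card_image_of_injOn hfst).symm
    _ ≤ Finset.univ.card := Finset.card_le_univ _
    _ = Fintype.card α := Finset.card_univ
  have hbdd : BddAbove Smatch := ⟨Fintype.card α, fun j hj => hbd j hj⟩
  set m : ℕ := sSup Smatch with hm
  have hmmem : m ∈ Smatch := Nat.sSup_mem ⟨0, h0⟩ hbdd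
  refine ⟨Fintype.card α - m, m, ?_, ⟨hmmem, fun j hj => le_csSup hbdd hj⟩, rfl⟩
  constructor
  · -- membership: a cover of size card α - m exists
    obtain ⟨M, hlt, hfst, hsnd, hcard⟩ := hmmem
    obtain ⟨C, hc1, hc2, hc3⟩ := exists_cover hlt hfst hsnd
    exact ⟨C, hc1, hc2, by rw [hc3, hcard]⟩
  · -- lower bound
    rintro j ⟨C, hc1, hc2, rfl⟩
    obtain ⟨M', hlt', hfst', hsnd', hge⟩ := exists_matching_of_cover C hc1 hc2
    have hmem' : M'.card ∈ Smatch := ⟨M', hlt', hfst', hsnd', rfl⟩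
    have hle' : M'.card ≤ m := le_csSup hbdd hmem'
    omega
end

section
/- Let R be a finite set of reads over alphabet A for a genome of length n ≥ 1. The set cc(R) of haplotypes completely consistent with R is an explaining set for R if and only if every irredundant read of R occurs in some covering chain in R. -/
/-! Basic definitions about reads, following Eriksson et al.,
"Viral population estimation using pyrosequencing".

A read is a pair `r = (s, w)` of a start position `s : ℕ` and a word
`w : List A`; it covers positions `s, …, s + w.length - 1`. -/

/-- The read `r` covers position `p`. -/
def Covers {A : Type*} (r : ℕ × List A) (p : ℕ) : Prop :=
  r.1 ≤ p ∧ p < r.1 + r.2.length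

/-- Two reads agree on their overlap: at every position covered by both, the
corresponding letters of the two reads are equal. -/
def Agree {A : Type*} (r r' : ℕ × List A) : Prop :=
  ∀ p, (hp : Covers r p) → (hp' : Covers r' p) →
    r.2.get ⟨p - r.1, by have h1 := hp.1; have h2 := hp.2; omega⟩ =
    r'.2.get ⟨p - r'.1, by have h1 := hp'.1; have h2 := hp'.2; omega⟩

/-- Two reads overlap: some position is covered by both. -/
def Overlaps {A : Type*} (r r' : ℕ × List A) : Prop :=
  ∃ p, Covers r p ∧ Covers r' p

/-- A valid read for a genome of length `n`: nonempty word, fitting inside the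
genome. -/
def ValidRead {A : Type*} (n : ℕ) (r : ℕ × List A) : Prop :=
  r.2 ≠ [] ∧ r.1 + r.2.length ≤ n

/-- The haplotype `h : Fin n → A` is consistent with the read `r`. -/
def Consistent {A : Type*} (n : ℕ) (h : Fin n → A) (r : ℕ × List A) : Prop :=
  ∀ i, (hi : i < r.2.length) → (hn : r.1 + i < n) →
    h ⟨r.1 + i, hn⟩ = r.2.get ⟨i, hi⟩

/-- A read `r` is redundant in `R` if some other read of `R` covers all positions
of `r` and agrees with `r` on their overlap. -/
def Redundant {A : Type*} (R : Finset (ℕ × List A)) (r : ℕ × List A) : Prop :=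
  ∃ r' ∈ R, r' ≠ r ∧ (∀ p, Covers r p → Covers r' p) ∧ Agree r r'

/-- A covering chain in `R` for a genome of length `n`: a nonempty sequence of
reads of `R` with nondecreasing start positions and nondecreasing end
positions, whose first read covers position `0`, whose last read covers
position `n - 1`, and in which each consecutive pair of reads overlaps and
agrees on its overlap. -/
def CoveringChain {A : Type*} (n : ℕ) (R : Finset (ℕ × List A))
    (c : List (ℕ × List A)) : Prop :=
  c ≠ [] ∧ (∀ r ∈ c, r ∈ R) ∧
  c.Chain' (fun r r' => r.1 ≤ r'.1) ∧
  c.Chain' (fun r r' => r.1 + r.2.length ≤ r'.1 + r'.2.length) ∧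
  (∀ r ∈ c.head?, Covers r 0) ∧
  (∀ r ∈ c.getLast?, Covers r (n - 1)) ∧
  c.Chain' (fun r r' => Overlaps r r' ∧ Agree r r')

/-- A haplotype is completely consistent with `R` if it can be constructed from a
covering chain of reads of `R`: i.e., some covering chain in `R` consists of
reads all consistent with the haplotype. -/
def CompletelyConsistent {A : Type*} (n : ℕ) (R : Finset (ℕ × List A))
    (h : Fin n → A) : Prop :=
  ∃ c, CoveringChain n R c ∧ ∀ r ∈ c, Consistent n h r

section Aux
variable {A : Type*}

lemma agree_refl (r : ℕ × List A) : Agree r r := fun _ _ _ => rfl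

lemma agree_symm {r r' : ℕ × List A} (h : Agree r r') : Agree r' r :=
  fun p hp hp' => (h p hp' hp).symm

lemma agree_of_consistent {n : ℕ} {h : Fin n → A} {r r' : ℕ × List A}
    (hr : r.1 + r.2.length ≤ n) (hr' : r'.1 + r'.2.length ≤ n)
    (hc : Consistent n h r) (hc' : Consistent n h r') : Agree r r' := by
  intro p hp hp'
  obtain ⟨a1, a2⟩ := hp; obtain ⟨b1, b2⟩ := hp'
  have h1 := hc (p - r.1) (by omega) (by omega)
  have h2 := hc' (p - r'.1) (by omega) (by omega)
  rw [← h1, ← h2]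
  congr 1
  apply Fin.ext
  simp
  omega

lemma consistent_of_covered {n : ℕ} {h : Fin n → A} {r r' : ℕ × List A}
    (hcons : Consistent n h r') (hcov : ∀ p, Covers r p → Covers r' p)
    (hagr : Agree r r') : Consistent n h r := by
  intro i hi hn
  have hp : Covers r (r.1 + i) := ⟨Nat.le_add_right _ _, by omega⟩
  have hp' := hcov _ hp
  obtain ⟨b1, b2⟩ := hp'
  have h1 := hcons (r.1 + i - r'.1) (by omega) (by omega)
  have h2 := hagr (r.1 + i) hp ⟨b1, b2⟩
  have e1 : (⟨r.1 + i - r.1, by omega⟩ : Fin r.2.length) = ⟨i, hi⟩ := Fin.ext (by simp)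
  rw [e1] at h2
  rw [h2]
  rw [← h1]
  congr 1
  apply Fin.ext
  simp
  omega

lemma read_eq_of_agree {r r' : ℕ × List A} (hs : r.1 = r'.1)
    (hl : r.2.length = r'.2.length) (ha : Agree r r') : r = r' := by
  obtain ⟨s, w⟩ := r; obtain ⟨s', w'⟩ := r'
  simp only at hs hl
  subst hs
  suffices hw : w = w' by rw [hw]
  apply List.ext_get hl
  intro i h1 h2
  have := ha (s + i) ⟨Nat.le_add_right _ _, by simp; omega⟩ ⟨Nat.le_add_right _ _, by simp; omega⟩
  simpa using this


lemma cover_exists :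
    ∀ (c : List (ℕ × List A)), c.Chain' (fun r r' => Overlaps r r' ∧ Agree r r') →
    ∀ p : ℕ, (∀ r ∈ c.head?, r.1 ≤ p) → (∀ r ∈ c.getLast?, p < r.1 + r.2.length) →
    c ≠ [] → ∃ r ∈ c, Covers r p
  | [], _, _, _, _, h => absurd rfl h
  | [a], _, p, hh, hl, _ =>
      ⟨a, List.mem_singleton.mpr rfl, hh a rfl, hl a rfl⟩
  | a :: b :: t, hch, p, hh, hl, _ => by
      by_cases hpa : p < a.1 + a.2.length
      · exact ⟨a, by simp, hh a rfl, hpa⟩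
      · obtain ⟨r, hr, hcov⟩ := cover_exists (b :: t) hch.tail p
          (by
            intro x hx
            simp only [List.head?_cons, Option.mem_some_iff] at hx
            subst hx
            obtain ⟨⟨q, hq, hq'⟩, -⟩ := List.isChain_cons_cons.mp hch |>.1
            have := hq.2; have := hq'.1
            omega)
          (by intro x hx; exact hl x (by rw [List.getLast?_cons_cons]; exact hx))
          (by simp)
        exact ⟨r, List.mem_cons_of_mem _ hr, hcov⟩

lemma chain_agree_at :
    ∀ (c : List (ℕ × List A)),
      c.Pairwise (fun r r' => r.1 ≤ r'.1) →
      c.Chain' (fun r r' => r.1 + r.2.length ≤ r'.1 + r'.2.length) →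
      c.Chain' (fun r r' => Overlaps r r' ∧ Agree r r') →
      ∀ (p : ℕ) r r', r ∈ c → r' ∈ c → Covers r p → Covers r' p →
      ∀ (h1 : p - r.1 < r.2.length) (h2 : p - r'.1 < r'.2.length),
        r.2.get ⟨p - r.1, h1⟩ = r'.2.get ⟨p - r'.1, h2⟩
  | [], _, _, _, _, _, _, hr, _, _, _, _, _ => absurd hr (by simp)
  | a :: t, hpw, hen, hov, p, r, r', hr, hr', hcr, hcr', h1, h2 => by
      rcases List.mem_cons.mp hr with rfl | hrt
      · rcases List.mem_cons.mp hr' with rfl | hrt'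
        · rfl
        · -- r = a, r' ∈ t
          match t, hrt' with
          | b :: t', hrt' =>
            have hab : Overlaps r b ∧ Agree r b := (List.isChain_cons_cons.mp hov).1
            have hsb : b.1 ≤ r'.1 := by
              rcases List.mem_cons.mp hrt' with rfl | h
              · exact le_refl _
              · exact ((List.pairwise_cons.mp (List.pairwise_cons.mp hpw).2).1 _ h)
            have hcb : Covers b p := by
              constructor
              · exact le_trans hsb hcr'.1
              · have := (List.isChain_cons_cons.mp hen).1
                have := hcr.2
                omega
            have e1 := hab.2 p hcr hcb
            have e2 := chain_agree_at (b :: t') hpw.tail hen.tail hov.tail p b r'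
              (by simp) hrt' hcb hcr' (by have := hcb.1; have := hcb.2; omega) h2
            exact e1.trans e2
      · rcases List.mem_cons.mp hr' with rfl | hrt'
        · -- r ∈ t, r' = a : symmetric
          match t, hrt with
          | b :: t', hrt =>
            have hab : Overlaps r' b ∧ Agree r' b := (List.isChain_cons_cons.mp hov).1
            have hsb : b.1 ≤ r.1 := by
              rcases List.mem_cons.mp hrt with rfl | h
              · exact le_refl _
              · exact ((List.pairwise_cons.mp (List.pairwise_cons.mp hpw).2).1 _ h)
            have hcb : Covers b p := by
              constructor
              · exact le_trans hsb hcr.1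
              · have := (List.isChain_cons_cons.mp hen).1
                have := hcr'.2
                omega
            have e1 := hab.2 p hcr' hcb
            have e2 := chain_agree_at (b :: t') hpw.tail hen.tail hov.tail p b r
              (by simp) hrt hcb hcr (by have := hcb.1; have := hcb.2; omega) h1
            exact (e1.trans e2).symm
        · exact chain_agree_at t hpw.tail hen.tail hov.tail p r r' hrt hrt' hcr hcr' h1 h2


noncomputable def letterAt (c : List (ℕ × List A)) (p : ℕ)
    (hp : ∃ r, r ∈ c ∧ Covers r p) : A :=
  hp.choose.2.get ⟨p - hp.choose.1, by
    obtain ⟨-, h1, h2⟩ := hp.choose_spec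
    omega⟩

lemma exists_consistent_haplotype {n : ℕ} {R : Finset (ℕ × List A)}
    {c : List (ℕ × List A)} (hc : CoveringChain n R c) (hn : 1 ≤ n) :
    ∃ h : Fin n → A, ∀ r ∈ c, Consistent n h r := by
  obtain ⟨hne, hmem, hst, hen, hhd, hlt, hov⟩ := hc
  have hcov : ∀ p : ℕ, p < n → ∃ r, r ∈ c ∧ Covers r p := by
    intro p hp
    obtain ⟨r, hr, h⟩ := cover_exists c hov p
      (fun x hx => le_trans (hhd x hx).1 (Nat.zero_le p))
      (fun x hx => by have := (hlt x hx).2; omega)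
      hne
    exact ⟨r, hr, h⟩
  haveI : IsTrans (ℕ × List A) (fun r r' => r.1 ≤ r'.1) :=
    ⟨fun _ _ _ h1 h2 => le_trans h1 h2⟩
  have hpw : c.Pairwise (fun r r' => r.1 ≤ r'.1) := List.isChain_iff_pairwise.mp hst
  refine ⟨fun p => letterAt c p (hcov p p.2), ?_⟩
  intro r hr i hi hnn
  show letterAt c (r.1 + i) (hcov _ hnn) = _
  unfold letterAt
  obtain ⟨hxm, hxc⟩ := (hcov (r.1 + i) hnn).choose_spec
  have hx1 := hxc.1
  have hx2 := hxc.2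
  have key := chain_agree_at c hpw hen hov (r.1 + i) _ r hxm hr hxc
    ⟨Nat.le_add_right _ _, by omega⟩ (by omega) (by omega)
  rw [key]
  congr 1
  apply Fin.ext
  simp


lemma covers_all_interval {r r' : ℕ × List A} (hne : r.2 ≠ [])
    (h : ∀ p, Covers r p → Covers r' p) :
    r'.1 ≤ r.1 ∧ r.1 + r.2.length ≤ r'.1 + r'.2.length := by
  have hl : 0 < r.2.length := List.length_pos_iff.mpr hne
  have h1 := h r.1 ⟨le_refl _, by omega⟩
  have h2 := h (r.1 + r.2.length - 1) ⟨by omega, by omega⟩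
  exact ⟨h1.1, by have := h2.2; omega⟩

lemma backward_dir {n : ℕ} (hn : 1 ≤ n) {R : Finset (ℕ × List A)}
    (hvalid : ∀ r ∈ R, ValidRead n r)
    (H : ∀ r ∈ R, ¬ Redundant R r → ∃ c, CoveringChain n R c ∧ r ∈ c) :
    ∀ r ∈ R, ∃ h : Fin n → A,
      (∃ c, CoveringChain n R c ∧ ∀ x ∈ c, Consistent n h x) ∧ Consistent n h r := by
  intro r hrR
  classical
  set S := R.filter (fun r' => (∀ p, Covers r p → Covers r' p) ∧ Agree r r') with hS
  have hrS : r ∈ S := by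
    rw [hS, Finset.mem_filter]
    exact ⟨hrR, fun p hp => hp, agree_refl r⟩
  obtain ⟨rs, hrsS, hmax⟩ := S.exists_max_image (fun x => x.2.length) ⟨r, hrS⟩
  rw [hS, Finset.mem_filter] at hrsS
  obtain ⟨hrsR, hcov, hagr⟩ := hrsS
  have hirr : ¬ Redundant R rs := by
    rintro ⟨r'', hR'', hne'', hcov'', hagr''⟩
    have hcovr : ∀ p, Covers r p → Covers r'' p := fun p hp => hcov'' p (hcov p hp)
    have hagrr : Agree r r'' := by
      intro p hp hp'
      have hp2 := hcov p hp
      exact (hagr p hp hp2).trans (hagr'' p hp2 (hcov'' p hp2))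
    have hmem'' : r'' ∈ S := by
      rw [hS, Finset.mem_filter]
      exact ⟨hR'', hcovr, hagrr⟩
    have hlen := hmax r'' hmem''
    have hint := covers_all_interval (hvalid rs hrsR).1 hcov''
    have hs : rs.1 = r''.1 := by omega
    have hl : rs.2.length = r''.2.length := by omega
    exact hne'' (read_eq_of_agree hs hl hagr'').symm
  obtain ⟨c, hc, hrc⟩ := H rs hrsR hirr
  obtain ⟨h, hcons⟩ := exists_consistent_haplotype hc hn
  exact ⟨h, ⟨c, hc, hcons⟩, consistent_of_covered (hcons rs hrc) hcov hagr⟩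


private lemma head?_takeWhile_pos {α : Type*} {p : α → Bool} {l : List α} (h : l ≠ [])
    (hp : p (l.head h) = true) : (l.takeWhile p).head? = l.head? := by
  cases l with
  | nil => exact absurd rfl h
  | cons a t =>
      rw [List.takeWhile_cons_of_pos (by simpa using hp)]
      rfl

lemma forward_dir {n : ℕ} (hn : 1 ≤ n) {R : Finset (ℕ × List A)}
    (hvalid : ∀ r ∈ R, ValidRead n r)
    (H : ∀ r ∈ R, ∃ h : Fin n → A,
      (∃ c, CoveringChain n R c ∧ ∀ x ∈ c, Consistent n h x) ∧ Consistent n h r) :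
    ∀ r ∈ R, ¬ Redundant R r → ∃ c, CoveringChain n R c ∧ r ∈ c := by
  intro r hrR hirr
  obtain ⟨h, ⟨c, hc, hcons⟩, hconsr⟩ := H r hrR
  by_cases hrc : r ∈ c
  · exact ⟨c, hc, hrc⟩
  obtain ⟨hne, hmem, hst, hen, hhd, hlt, hov⟩ := hc
  have hvr := hvalid r hrR
  have hlen : 0 < r.2.length := List.length_pos_iff.mpr hvr.1
  have hagrc : ∀ x ∈ c, Agree r x := fun x hx =>
    agree_of_consistent hvr.2 (hvalid x (hmem x hx)).2 hconsr (hcons x hx)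
  have hcontain : ∀ x ∈ c, x.1 ≤ r.1 → r.1 + r.2.length ≤ x.1 + x.2.length → False := by
    intro x hx h1 h2
    exact hirr ⟨x, hmem x hx, fun hh => hrc (hh ▸ hx),
      fun p hp => ⟨le_trans h1 hp.1, lt_of_lt_of_le hp.2 h2⟩, hagrc x hx⟩
  haveI ist : IsTrans (ℕ × List A) (fun x y => x.1 ≤ y.1) := ⟨fun _ _ _ => le_trans⟩
  haveI iet : IsTrans (ℕ × List A) (fun x y => x.1 + x.2.length ≤ y.1 + y.2.length) :=
    ⟨fun _ _ _ => le_trans⟩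
  have pwst : c.Pairwise (fun x y => x.1 ≤ y.1) := List.isChain_iff_pairwise.mp hst
  have pwen : c.Pairwise (fun x y => x.1 + x.2.length ≤ y.1 + y.2.length) :=
    List.isChain_iff_pairwise.mp hen
  have hcovall : ∀ p : ℕ, p < n → ∃ x, x ∈ c ∧ Covers x p := by
    intro p hp
    obtain ⟨x, hx, hxc⟩ := cover_exists c hov p
      (fun x hx => le_trans (hhd x hx).1 (Nat.zero_le p))
      (fun x hx => by have := (hlt x hx).2; omega) hne
    exact ⟨x, hx, hxc⟩
  classical
  set Pb : ℕ × List A → Bool :=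
    fun x => decide (x.1 ≤ r.1 ∧ x.1 + x.2.length ≤ r.1 + r.2.length) with hPb
  set Qb : ℕ × List A → Bool :=
    fun x => decide (r.1 ≤ x.1 ∧ r.1 + r.2.length ≤ x.1 + x.2.length) with hQb
  set L : List (ℕ × List A) := c.takeWhile Pb with hLdef
  set Rt : List (ℕ × List A) := (c.reverse.takeWhile Qb).reverse with hRdef
  have hLpre : L <+: c := List.takeWhile_prefix _
  have hRsuf : Rt <:+ c := by
    have h1 : Rt.reverse <+: c.reverse := by
      rw [hRdef, List.reverse_reverse]
      exact List.takeWhile_prefix _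
    exact List.reverse_prefix.mp h1
  have hLc : ∀ x ∈ L, x ∈ c := fun x hx => hLpre.sublist.subset hx
  have hRc : ∀ x ∈ Rt, x ∈ c := fun x hx => hRsuf.sublist.subset hx
  have hmemL : ∀ x ∈ L, x.1 ≤ r.1 ∧ x.1 + x.2.length ≤ r.1 + r.2.length := by
    intro x hx
    have := List.mem_takeWhile_imp (hLdef ▸ hx)
    simpa [hPb] using this
  have hmemRt : ∀ x ∈ Rt, r.1 ≤ x.1 ∧ r.1 + r.2.length ≤ x.1 + x.2.length := by
    intro x hx
    have hx' : x ∈ c.reverse.takeWhile Qb := by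
      rw [hRdef] at hx; exact List.mem_reverse.mp hx
    have := List.mem_takeWhile_imp hx'
    simpa [hQb] using this
  have hPmemL : ∀ x ∈ c, x.1 ≤ r.1 → x.1 + x.2.length ≤ r.1 + r.2.length → x ∈ L := by
    intro x hx h1 h2
    by_contra hxL
    have hxd : x ∈ c.dropWhile Pb := by
      have hsplit := List.takeWhile_append_dropWhile (p := Pb) (l := c)
      rw [← hsplit] at hx
      rcases List.mem_append.mp hx with hh | hh
      · exact absurd hh hxL
      · exact hh
    rcases hd : c.dropWhile Pb with _ | ⟨d, ds⟩
    · rw [hd] at hxd; exact absurd hxd List.not_mem_nil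
    · rw [hd] at hxd
      have hPd : ¬ (d.1 ≤ r.1 ∧ d.1 + d.2.length ≤ r.1 + r.2.length) := by
        have hl0 : 0 < (c.dropWhile Pb).length := by rw [hd]; simp
        have := List.dropWhile_get_zero_not Pb c hl0
        have hget : (c.dropWhile Pb).get ⟨0, hl0⟩ = d := by
          simp [hd]
        rw [hget] at this
        simpa [hPb] using this
      have hsub : List.Sublist (d :: ds) c := by
        rw [← hd]; exact (List.dropWhile_suffix Pb).sublist
      have pst := List.pairwise_cons.mp (pwst.sublist hsub)
      have pen := List.pairwise_cons.mp (pwen.sublist hsub)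
      rcases List.mem_cons.mp hxd with rfl | hxds
      · exact hPd ⟨h1, h2⟩
      · have a1 := pst.1 x hxds
        have a2 := pen.1 x hxds
        exact hPd ⟨le_trans a1 h1, le_trans a2 h2⟩
  have hQmemRt : ∀ x ∈ c, r.1 ≤ x.1 → r.1 + r.2.length ≤ x.1 + x.2.length → x ∈ Rt := by
    intro x hx h1 h2
    by_contra hxR
    have hxrev : x ∈ c.reverse := List.mem_reverse.mpr hx
    have hxL' : x ∉ c.reverse.takeWhile Qb := by
      intro hh
      exact hxR (by rw [hRdef]; exact List.mem_reverse.mpr hh)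
    have hxd : x ∈ c.reverse.dropWhile Qb := by
      have hsplit := List.takeWhile_append_dropWhile (p := Qb) (l := c.reverse)
      rw [← hsplit] at hxrev
      rcases List.mem_append.mp hxrev with hh | hh
      · exact absurd hh hxL'
      · exact hh
    rcases hd : c.reverse.dropWhile Qb with _ | ⟨d, ds⟩
    · rw [hd] at hxd; exact absurd hxd List.not_mem_nil
    · rw [hd] at hxd
      have hQd : ¬ (r.1 ≤ d.1 ∧ r.1 + r.2.length ≤ d.1 + d.2.length) := by
        have hl0 : 0 < (c.reverse.dropWhile Qb).length := by rw [hd]; simp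
        have := List.dropWhile_get_zero_not Qb c.reverse hl0
        have hget : (c.reverse.dropWhile Qb).get ⟨0, hl0⟩ = d := by simp [hd]
        rw [hget] at this
        simpa [hQb] using this
      have hsub : List.Sublist (d :: ds) c.reverse := by
        rw [← hd]; exact (List.dropWhile_suffix Qb).sublist
      have pwstR : c.reverse.Pairwise (fun x y => y.1 ≤ x.1) :=
        List.pairwise_reverse.mpr pwst
      have pwenR : c.reverse.Pairwise (fun x y => y.1 + y.2.length ≤ x.1 + x.2.length) :=
        List.pairwise_reverse.mpr pwen
      have pst := List.pairwise_cons.mp (pwstR.sublist hsub)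
      have pen := List.pairwise_cons.mp (pwenR.sublist hsub)
      rcases List.mem_cons.mp hxd with rfl | hxds
      · exact hQd ⟨h1, h2⟩
      · have a1 := pst.1 x hxds
        have a2 := pen.1 x hxds
        exact hQd ⟨le_trans h1 a1, le_trans h2 a2⟩
  have hclass : ∀ x ∈ c, x ∈ L ∨ x ∈ Rt ∨
      (r.1 < x.1 ∧ x.1 + x.2.length < r.1 + r.2.length) := by
    intro x hx
    by_cases hP : x.1 ≤ r.1 ∧ x.1 + x.2.length ≤ r.1 + r.2.length
    · exact Or.inl (hPmemL x hx hP.1 hP.2)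
    by_cases hQ : r.1 ≤ x.1 ∧ r.1 + r.2.length ≤ x.1 + x.2.length
    · exact Or.inr (Or.inl (hQmemRt x hx hQ.1 hQ.2))
    · have hcx : ¬ (x.1 ≤ r.1 ∧ r.1 + r.2.length ≤ x.1 + x.2.length) :=
        fun ⟨a, b⟩ => hcontain x hx a b
      right; right
      omega
  -- L nonempty with head = head of c
  have hPc1 : Pb (c.head hne) = true := by
    have hc1 : Covers (c.head hne) 0 := hhd _ (List.head?_eq_head hne)
    have h1 : (c.head hne).1 = 0 := by have := hc1.1; omega
    have h2 : (c.head hne).1 + (c.head hne).2.length ≤ r.1 + r.2.length := by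
      by_contra hcon
      exact hcontain (c.head hne) (List.head_mem hne) (by omega) (by omega)
    simp only [hPb, decide_eq_true_eq]
    exact ⟨by omega, h2⟩
  have hLhead : L.head? = c.head? := head?_takeWhile_pos hne hPc1
  have hLne : L ≠ [] := by
    intro hh
    rw [hh] at hLhead
    rw [List.head?_eq_head hne] at hLhead
    simp at hLhead
  -- Rt nonempty with last = last of c
  have hrevne : c.reverse ≠ [] := by simpa using hne
  have hQlast : Qb (c.reverse.head hrevne) = true := by
    have hlast : c.reverse.head? = c.getLast? := List.head?_reverse (l := c)
    have hc1 : Covers (c.reverse.head hrevne) (n - 1) := by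
      apply hlt
      rw [← hlast]
      exact List.head?_eq_head hrevne
    have hvl := hvalid _ (hmem _ (by
      have := List.head_mem hrevne
      exact List.mem_reverse.mp this))
    have h2 : r.1 + r.2.length ≤ (c.reverse.head hrevne).1 + (c.reverse.head hrevne).2.length := by
      have := hc1.2
      have := hvr.2
      omega
    have h1 : r.1 ≤ (c.reverse.head hrevne).1 := by
      by_contra hcon
      exact hcontain (c.reverse.head hrevne)
        (List.mem_reverse.mp (List.head_mem hrevne)) (by omega) h2
    simp only [hQb, decide_eq_true_eq]
    exact ⟨h1, h2⟩
  have hRlast : Rt.getLast? = c.getLast? := by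
    rw [hRdef, List.getLast?_reverse]
    rw [head?_takeWhile_pos hrevne hQlast]
    exact List.head?_reverse (l := c)
  have hRne : Rt ≠ [] := by
    intro hh
    rw [hh] at hRlast
    rw [List.getLast?_eq_getLast_of_ne_nil hne] at hRlast
    simp at hRlast
  -- last of L overlaps r
  set sL := L.getLast hLne with hsL
  have hsLmem : sL ∈ L := List.getLast_mem hLne
  have hsLP := hmemL sL hsLmem
  have hLmax : ∀ x ∈ L, x.1 + x.2.length ≤ sL.1 + sL.2.length := by
    intro x hx
    have hdec := List.dropLast_append_getLast hLne
    have pwenL : L.Pairwise (fun x y => x.1 + x.2.length ≤ y.1 + y.2.length) :=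
      pwen.sublist hLpre.sublist
    rw [← hdec] at pwenL hx
    rcases List.mem_append.mp hx with hh | hh
    · exact (List.pairwise_append.mp pwenL).2.2 x hh sL (by simp [hsL])
    · have : x = sL := by simpa [hsL] using hh
      rw [this]
  have hoverL : r.1 < sL.1 + sL.2.length := by
    by_contra hcon
    push_neg at hcon
    have hq : sL.1 + sL.2.length < n := by
      have := hvr.2
      omega
    obtain ⟨x, hxc, hxcov⟩ := hcovall (sL.1 + sL.2.length) hq
    rcases hclass x hxc with hx | hx | hx
    · have := hLmax x hx
      have := hxcov.2
      omega
    · have hxp := hmemRt x hx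
      have := hxcov.1
      exact hcontain x hxc (by omega) (by omega)
    · have := hxcov.1
      omega
  have hovsL : Overlaps sL r :=
    ⟨r.1, ⟨hsLP.1, hoverL⟩, ⟨le_refl _, by omega⟩⟩
  -- head of Rt overlaps r
  set qH := Rt.head hRne with hqH
  have hqHmem : qH ∈ Rt := List.head_mem hRne
  have hqHP := hmemRt qH hqHmem
  have hRmin : ∀ x ∈ Rt, qH.1 ≤ x.1 := by
    intro x hx
    have hdec := List.cons_head_tail hRne
    have pwstR : Rt.Pairwise (fun x y => x.1 ≤ y.1) := pwst.sublist hRsuf.sublist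
    rw [← hdec] at pwstR hx
    rcases List.mem_cons.mp hx with rfl | hh
    · exact le_refl _
    · exact (List.pairwise_cons.mp pwstR).1 x hh
  have hoverR : qH.1 < r.1 + r.2.length := by
    by_contra hcon
    push_neg at hcon
    have hvq := hvalid qH (hmem qH (hRc qH hqHmem))
    have hq : qH.1 - 1 < n := by
      have := hvq.2
      have : 0 < qH.2.length := List.length_pos_iff.mpr hvq.1
      omega
    obtain ⟨x, hxc, hxcov⟩ := hcovall (qH.1 - 1) hq
    rcases hclass x hxc with hx | hx | hx
    · have hxp := hmemL x hx
      have := hxcov.2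
      exact hcontain x hxc hxp.1 (by omega)
    · have := hRmin x hx
      have := hxcov.1
      omega
    · have := hxcov.2
      omega
  have hvq := hvalid qH (hmem qH (hRc qH hqHmem))
  have hqlen : 0 < qH.2.length := List.length_pos_iff.mpr hvq.1
  have hovqH : Overlaps r qH :=
    ⟨qH.1, ⟨hqHP.1, hoverR⟩, ⟨le_refl _, by omega⟩⟩
  -- assemble
  refine ⟨L ++ r :: Rt, ⟨?_, ?_, ?_, ?_, ?_, ?_, ?_⟩, by simp⟩
  · simp
  · intro x hx
    rcases List.mem_append.mp hx with hh | hh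
    · exact hmem x (hLc x hh)
    · rcases List.mem_cons.mp hh with rfl | hh
      · exact hrR
      · exact hmem x (hRc x hh)
  · apply List.Pairwise.isChain
    rw [List.pairwise_append]
    refine ⟨pwst.sublist hLpre.sublist, ?_, ?_⟩
    · rw [List.pairwise_cons]
      exact ⟨fun y hy => (hmemRt y hy).1, pwst.sublist hRsuf.sublist⟩
    · intro a ha b hb
      have h1 := (hmemL a ha).1
      rcases List.mem_cons.mp hb with rfl | hb
      · exact h1
      · exact le_trans h1 (hmemRt b hb).1
  · apply List.Pairwise.isChain
    rw [List.pairwise_append]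
    refine ⟨pwen.sublist hLpre.sublist, ?_, ?_⟩
    · rw [List.pairwise_cons]
      exact ⟨fun y hy => (hmemRt y hy).2, pwen.sublist hRsuf.sublist⟩
    · intro a ha b hb
      have h1 := (hmemL a ha).2
      rcases List.mem_cons.mp hb with rfl | hb
      · exact h1
      · exact le_trans h1 (hmemRt b hb).2
  · rw [List.head?_append_of_ne_nil _ hLne, hLhead]
    exact hhd
  · rw [List.getLast?_append_of_ne_nil _ (by simp)]
    have : (r :: Rt).getLast? = Rt.getLast? := by
      cases hRt0 : Rt with
      | nil => exact absurd hRt0 hRne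
      | cons a t => simp
    rw [this, hRlast]
    exact hlt
  · show List.IsChain _ _
    rw [List.isChain_append]
    refine ⟨hov.prefix hLpre, ?_, ?_⟩
    · rw [List.isChain_cons]
      refine ⟨?_, hov.suffix hRsuf⟩
      intro y hy
      have hyq : y = qH := by
        rw [List.head?_eq_head hRne] at hy
        exact (by simpa [hqH] using hy : Rt.head hRne = y).symm
      rw [hyq]
      exact ⟨hovqH, hagrc qH (hRc qH hqHmem)⟩
    · intro a ha b hb
      have hasL : a = sL := by
        rw [List.getLast?_eq_getLast_of_ne_nil hLne] at ha
        exact (by simpa [hsL] using ha : L.getLast hLne = a).symm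
      have hbr : b = r := by
        simp at hb
        exact hb.symm
      rw [hasL, hbr]
      exact ⟨hovsL, agree_symm (hagrc sL (hLc sL hsLmem))⟩

end Aux

/-- **Proposition of Eriksson et al..** The set of haplotypes
completely consistent with `R` is an explaining set for `R` (every read of `R`
is consistent with some completely consistent haplotype) if and only if every
irredundant read of `R` occurs in some covering chain in `R`. -/


theorem completelyConsistent_explains_iff {A : Type*} (n : ℕ) (hn : 1 ≤ n)
    (R : Finset (ℕ × List A)) (hvalid : ∀ r ∈ R, ValidRead n r) :
    (∀ r ∈ R, ∃ h : Fin n → A, CompletelyConsistent n R h ∧ Consistent n h r) ↔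
    (∀ r ∈ R, ¬ Redundant R r → ∃ c, CoveringChain n R c ∧ r ∈ c) := by
  constructor
  · intro H
    exact forward_dir hn hvalid H
  · intro H r hr
    exact backward_dir hn hvalid H r hr
end

section
/- Let R be a finite set of reads over alphabet A for a genome of length n ≥ 1, and let r_1, …, r_k be a covering chain in R. Then there exists exactly one haplotype h : Fin n → A that is consistent with every read r_1, …, r_k of the chain. -/
/-- The letter of read `r` at a position `p` it covers. -/
def lett {A : Type*} (r : ℕ × List A) (p : ℕ) (hp : Covers r p) : A :=
  r.2.get ⟨p - r.1, by have h1 := hp.1; have h2 := hp.2; omega⟩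

/-- Monotonicity along a chain of `≤` values. -/
lemma chain_mono {B : Type*} (c : List B) (f : B → ℕ)
    (hch : c.Chain' (fun r r' => f r ≤ f r')) :
    ∀ i j (hi : i < c.length) (hj : j < c.length), i ≤ j →
      f (c.get ⟨i, hi⟩) ≤ f (c.get ⟨j, hj⟩) := by
  have hstep := List.isChain_iff_getElem.mp hch
  intro i j hi hj hij
  induction j with
  | zero =>
    have h0 : i = 0 := by omega
    subst h0; rfl
  | succ m ih =>
    rcases Nat.lt_or_ge i (m + 1) with h | h
    · have hm : m < c.length := by omega
      exact le_trans (ih hm (by omega)) (hstep m (by omega))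
    · have h1 : i = m + 1 := by omega
      subst h1; rfl

/-- Two reads of a chain covering the same position have the same letter there. -/
lemma chain_same_lett {A : Type*} (c : List (ℕ × List A))
    (hs : c.Chain' (fun r r' => r.1 ≤ r'.1))
    (he : c.Chain' (fun r r' => r.1 + r.2.length ≤ r'.1 + r'.2.length))
    (hag : c.Chain' (fun r r' => Overlaps r r' ∧ Agree r r')) (p : ℕ) :
    ∀ d i j (hi : i < c.length) (hj : j < c.length), j = i + d →
      (hpi : Covers (c.get ⟨i, hi⟩) p) → (hpj : Covers (c.get ⟨j, hj⟩) p) →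
      lett (c.get ⟨i, hi⟩) p hpi = lett (c.get ⟨j, hj⟩) p hpj := by
  have hsm := chain_mono c (fun r => r.1) hs
  have hem := chain_mono c (fun r => r.1 + r.2.length) he
  have hagstep := List.isChain_iff_getElem.mp hag
  intro d
  induction d with
  | zero => intro i j hi hj hij hpi hpj; subst hij; rfl
  | succ m ih =>
    intro i j hi hj hij hpi hpj
    have hm : i + m < c.length := by omega
    have hcovm : Covers (c.get ⟨i + m, hm⟩) p := by
      have h1 := hsm (i + m) j hm hj (by omega)
      have h2 := hem i (i + m) hi hm (by omega)
      exact ⟨le_trans h1 hpj.1, lt_of_lt_of_le hpi.2 h2⟩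
    have hjm : j = i + m + 1 := by omega
    subst hjm
    have hag' := (hagstep (i + m) (by omega)).2
    exact (ih i (i + m) hi hm rfl hpi hcovm).trans (hag' p hcovm hpj)

/-- A covering chain in `R` (for a genome of length `n ≥ 1`,
with all reads of `R` valid) determines exactly one haplotype: there is a unique
`h : Fin n → A` consistent with every read of the chain. -/
theorem coveringChain_unique_haplotype {A : Type*} (n : ℕ) (hn : 1 ≤ n)
    (R : Finset (ℕ × List A)) (hvalid : ∀ r ∈ R, ValidRead n r)
    (c : List (ℕ × List A)) (hc : CoveringChain n R c) :
    ∃! h : Fin n → A, ∀ r ∈ c, Consistent n h r := by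
  classical
  obtain ⟨hne, hmem, hs, he, hhead, hlast, hag⟩ := hc
  have hlen : 0 < c.length := List.length_pos_iff.mpr hne
  have h0 : Covers (c.get ⟨0, hlen⟩) 0 := by
    apply hhead
    rw [List.head?_eq_getElem?, List.getElem?_eq_getElem hlen]
    rfl
  have hlastlt : c.length - 1 < c.length := by omega
  have hl : Covers (c.get ⟨c.length - 1, hlastlt⟩) (n - 1) := by
    apply hlast
    rw [List.getLast?_eq_getElem?, List.getElem?_eq_getElem hlastlt]
    rfl
  have hagstep := List.isChain_iff_getElem.mp hag
  -- every position is covered by some read of the chain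
  have hcov : ∀ p, p < n → ∃ (i : ℕ) (hi : i < c.length),
      Covers (c.get ⟨i, hi⟩) p := by
    intro p hp
    set P : ℕ → Prop := fun i => ∃ hi : i < c.length, (c.get ⟨i, hi⟩).1 ≤ p
      with hP
    have hP0 : P 0 := ⟨hlen, h0.1.trans (Nat.zero_le p)⟩
    set i := Nat.findGreatest P (c.length - 1) with hidef
    have hile : i ≤ c.length - 1 := Nat.findGreatest_le _
    obtain ⟨hi, hstart⟩ : P i := Nat.findGreatest_spec (Nat.zero_le _) hP0
    refine ⟨i, hi, hstart, ?_⟩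
    rcases Nat.lt_or_ge i (c.length - 1) with hcase | hcase
    · have hi1 : i + 1 < c.length := by omega
      have hnP : ¬ P (i + 1) :=
        Nat.findGreatest_is_greatest (n := c.length - 1) (k := i + 1)
          (by omega) (by omega)
      have hstart1 : p < (c.get ⟨i + 1, hi1⟩).1 := by
        by_contra hcon
        push_neg at hcon
        exact hnP ⟨hi1, hcon⟩
      obtain ⟨q, hq1, hq2⟩ := (hagstep i hi1).1
      have : (c.get ⟨i + 1, hi1⟩).1 ≤ q := hq2.1
      have : q < (c.get ⟨i, hi⟩).1 + (c.get ⟨i, hi⟩).2.length := hq1.2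
      omega
    · have hl' : Covers (c.get ⟨i, hi⟩) (n - 1) := by
        have heq : (⟨i, hi⟩ : Fin c.length) = ⟨c.length - 1, hlastlt⟩ :=
          Fin.ext (show i = c.length - 1 by omega)
        rw [heq]; exact hl
      have := hl'.2
      omega
  choose idx hidx hcovidx using fun p : Fin n => hcov p p.isLt
  -- any two reads of the chain covering `p` have the same letter at `p`
  have hsame : ∀ (p : ℕ) (i j : ℕ) (hi : i < c.length) (hj : j < c.length)
      (hpi : Covers (c.get ⟨i, hi⟩) p) (hpj : Covers (c.get ⟨j, hj⟩) p),
      lett (c.get ⟨i, hi⟩) p hpi = lett (c.get ⟨j, hj⟩) p hpj := by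
    intro p i j hi hj hpi hpj
    rcases Nat.le_total i j with hij | hij
    · exact chain_same_lett c hs he hag p (j - i) i j hi hj (by omega) hpi hpj
    · exact (chain_same_lett c hs he hag p (i - j) j i hj hi (by omega)
        hpj hpi).symm
  set h : Fin n → A := fun p => lett (c.get ⟨idx p, hidx p⟩) p (hcovidx p)
    with hdef
  refine ⟨h, ?_, ?_⟩
  · intro r hr
    obtain ⟨j, hjr⟩ := List.mem_iff_get.mp hr
    subst hjr
    intro i hi hni
    have hpr : Covers (c.get j) ((c.get j).1 + i) :=
      ⟨Nat.le_add_right _ _, by omega⟩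
    have key := hsame ((c.get j).1 + i) (idx ⟨(c.get j).1 + i, hni⟩) j.1
      (hidx ⟨(c.get j).1 + i, hni⟩) j.2 (hcovidx ⟨(c.get j).1 + i, hni⟩) hpr
    have h1 : h ⟨(c.get j).1 + i, hni⟩ =
        lett (c.get j) ((c.get j).1 + i) hpr := key
    rw [h1]
    show (c.get j).2.get ⟨(c.get j).1 + i - (c.get j).1, _⟩ =
      (c.get j).2.get ⟨i, hi⟩
    simp only [Nat.add_sub_cancel_left]
  · intro h' hh'
    funext p
    have hrm : c.get ⟨idx p, hidx p⟩ ∈ c := List.get_mem c _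
    have hc1 : (c.get ⟨idx p, hidx p⟩).1 ≤ (p : ℕ) := (hcovidx p).1
    have hc2 : (p : ℕ) < (c.get ⟨idx p, hidx p⟩).1 +
        (c.get ⟨idx p, hidx p⟩).2.length := (hcovidx p).2
    have hcons := hh' _ hrm ((p : ℕ) - (c.get ⟨idx p, hidx p⟩).1)
      (by omega) (by omega)
    have hfin : (⟨(c.get ⟨idx p, hidx p⟩).1 +
        ((p : ℕ) - (c.get ⟨idx p, hidx p⟩).1), by omega⟩ : Fin n) = p :=
      Fin.ext (by simp only []; omega)
    rw [hfin] at hcons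
    exact hcons
end

section
/- Let r_1, …, r_k be a finite sequence of reads over alphabet A with nondecreasing start positions and nondecreasing end positions, such that each consecutive pair r_i, r_{i+1} overlaps and agrees on its overlap. Then any two reads r_i and r_j of the sequence agree on their overlap. -/
/-- If a finite sequence of reads (nonempty words) has
nondecreasing start positions, nondecreasing end positions, and each consecutive
pair of reads overlaps and agrees on its overlap, then any two reads of the
sequence agree on their overlap. -/
theorem chain_pairwise_agree {A : Type*} (c : List (ℕ × List A))
    (hne : ∀ r ∈ c, r.2 ≠ [])
    (hstart : c.Chain' (fun r r' => r.1 ≤ r'.1))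
    (hend : c.Chain' (fun r r' => r.1 + r.2.length ≤ r'.1 + r'.2.length))
    (hconsec : c.Chain' (fun r r' => Overlaps r r' ∧ Agree r r')) :
    c.Pairwise Agree := by

  have hlen := c.length
  -- monotone helper
  have mono : ∀ (f : ℕ × List A → ℕ), c.Chain' (fun r r' => f r ≤ f r') →
      ∀ j (hj : j < c.length) i (hi : i < c.length), i ≤ j →
        f (c.get ⟨i, hi⟩) ≤ f (c.get ⟨j, hj⟩) := by
    intro f hf j
    induction j with
    | zero =>
      intro hj i hi hij
      have : i = 0 := Nat.le_zero.mp hij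
      subst this; exact le_refl _
    | succ j ih =>
      intro hj i hi hij
      rcases Nat.eq_or_lt_of_le hij with h | h
      · subst h; exact le_refl _
      · have hj' : j < c.length := by omega
        have step := (List.isChain_iff_getElem.mp hf) j (by omega)
        exact le_trans (ih hj' i hi (by omega)) step
  have key : ∀ j (hj : j < c.length) i (hi : i < c.length), i < j →
      Agree (c.get ⟨i, hi⟩) (c.get ⟨j, hj⟩) := by
    intro j
    induction j with
    | zero => intro hj i hi hij; omega
    | succ j ih =>
      intro hj i hi hij
      have hj' : j < c.length := by omega
      have hcons := (List.isChain_iff_getElem.mp hconsec) j (by omega)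
      rcases Nat.eq_or_lt_of_le (Nat.lt_succ_iff.mp hij) with h | h
      · subst h; exact hcons.2
      · have hij' : Agree (c.get ⟨i, hi⟩) (c.get ⟨j, hj'⟩) := ih hj' i hi h
        intro p hp hp'
        have hcovmid : Covers (c.get ⟨j, hj'⟩) p := by
          have h1 : (c.get ⟨j, hj'⟩).1 ≤ (c.get ⟨j+1, hj⟩).1 :=
            mono (fun r => r.1) hstart (j+1) hj j hj' (by omega)
          have h2 : (c.get ⟨i, hi⟩).1 + (c.get ⟨i, hi⟩).2.length ≤
              (c.get ⟨j, hj'⟩).1 + (c.get ⟨j, hj'⟩).2.length :=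
            mono (fun r => r.1 + r.2.length) hend j hj' i hi (by omega)
          exact ⟨le_trans h1 hp'.1, lt_of_lt_of_le hp.2 h2⟩
        rw [hij' p hp hcovmid]
        exact hcons.2 p hcovmid hp'
  rw [List.pairwise_iff_get]
  intro i j hij
  exact key j j.isLt i i.isLt hij
end
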